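/- arXiv:1501.02193 — 5 statements merged into one kernel-verified Lean document; each statement's English description precedes it below -/
import Mathlib

section
/- Let X and Y be independent random variables with values in (0,1), where X has the beta distribution with parameters (p₁+p₃, p₂) and Y has the beta distribution with parameters (p₃, p₁), for positive reals p₁, p₂, p₃. Then U = 1 - X·Y and V = (1 - X)/U are independent random variables. -/
open MeasureTheory ProbabilityTheory Set

/-- The beta distribution on `(0,1)` with parameters `(p, q)`. -/
noncomputable def betaMeasure (p q : ℝ) : Measure ℝ :=
  volume.withDensity fun x =>
    ENNReal.ofReal (if x ∈ Set.Ioo (0:ℝ) 1 then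
      x ^ (p - 1) * (1 - x) ^ (q - 1) / (Real.Gamma p * Real.Gamma q / Real.Gamma (p + q))
    else 0)

namespace BetaIndepAux

open scoped ENNReal

/-! ### Auxiliary material -/

noncomputable def bD (p q : ℝ) (x : ℝ) : ℝ :=
  if x ∈ Set.Ioo (0:ℝ) 1 then
    x ^ (p - 1) * (1 - x) ^ (q - 1) / (Real.Gamma p * Real.Gamma q / Real.Gamma (p + q))
  else 0

lemma betaMeasure_eq (p q : ℝ) :
    _root_.betaMeasure p q = volume.withDensity fun x => ENNReal.ofReal (bD p q x) := rfl

lemma bD_measurable (p q : ℝ) : Measurable (bD p q) := by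
  unfold bD
  apply Measurable.ite measurableSet_Ioo _ measurable_const
  fun_prop

lemma bD_zero {p q x : ℝ} (hx : x ∉ Set.Ioo (0:ℝ) 1) : bD p q x = 0 := if_neg hx

lemma bD_nonneg (p q x : ℝ) (hp : 0 < p) (hq : 0 < q) : 0 ≤ bD p q x := by
  unfold bD
  split
  · rename_i h
    have h1 := Real.Gamma_pos_of_pos hp
    have h2 := Real.Gamma_pos_of_pos hq
    have h3 := Real.Gamma_pos_of_pos (add_pos hp hq)
    have h4 := Real.rpow_nonneg (le_of_lt h.1) (p-1)
    have h5 := Real.rpow_nonneg (by linarith [h.2] : (0:ℝ) ≤ 1 - x) (q-1)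
    positivity
  · exact le_refl 0

/-! ### The linear map and transformation -/

noncomputable def mkL (a b c d : ℝ) : ℝ × ℝ →L[ℝ] ℝ × ℝ :=
  LinearMap.toContinuousLinearMap
    (Matrix.toLin (Module.Basis.finTwoProd ℝ) (Module.Basis.finTwoProd ℝ) !![a, b; c, d])

lemma mkL_det (a b c d : ℝ) : (mkL a b c d).det = a * d - b * c := by
  have h : (mkL a b c d : (ℝ × ℝ) →ₗ[ℝ] ℝ × ℝ)
      = Matrix.toLin (Module.Basis.finTwoProd ℝ) (Module.Basis.finTwoProd ℝ) !![a, b; c, d] :=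
    LinearMap.coe_toContinuousLinearMap _
  show LinearMap.det _ = _
  rw [h, LinearMap.det_toLin, Matrix.det_fin_two_of]

lemma mkL_apply (a b c d x y : ℝ) : mkL a b c d (x, y) = (a * x + b * y, c * x + d * y) := by
  simp [mkL, Matrix.toLin_apply, Module.Basis.finTwoProd, Matrix.mulVec, dotProduct,
    Fin.sum_univ_two, Matrix.vecHead, Matrix.vecTail]

noncomputable def Tm : ℝ × ℝ → ℝ × ℝ := fun p => (1 - p.1 * p.2, (1 - p.1) / (1 - p.1 * p.2))

noncomputable def Tm' (p : ℝ × ℝ) : ℝ × ℝ →L[ℝ] ℝ × ℝ :=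
  mkL (-p.2) (-p.1) ((p.2 - 1) / (1 - p.1 * p.2)^2) (p.1 * (1 - p.1) / (1 - p.1 * p.2)^2)

lemma hasFDerivAt_Tm (p : ℝ × ℝ) (hD : 1 - p.1 * p.2 ≠ 0) :
    HasFDerivAt Tm (Tm' p) p := by
  have hfst : HasFDerivAt (fun q : ℝ × ℝ => q.1) (ContinuousLinearMap.fst ℝ ℝ ℝ) p :=
    hasFDerivAt_fst
  have hsnd : HasFDerivAt (fun q : ℝ × ℝ => q.2) (ContinuousLinearMap.snd ℝ ℝ ℝ) p :=
    hasFDerivAt_snd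
  have hDf := (hasFDerivAt_const (1:ℝ) p).sub (hfst.mul hsnd)
  have hNf := (hasFDerivAt_const (1:ℝ) p).sub hfst
  have hInv : HasFDerivAt (fun q : ℝ × ℝ => (1 - q.1 * q.2)⁻¹)
      ((-ContinuousLinearMap.mulLeftRight ℝ ℝ (1 - p.1 * p.2)⁻¹ (1 - p.1 * p.2)⁻¹).comp
        (0 - (p.1 • ContinuousLinearMap.snd ℝ ℝ ℝ + p.2 • ContinuousLinearMap.fst ℝ ℝ ℝ))) p :=
    (hasFDerivAt_inv' hD).comp p hDf
  have h := hDf.prodMk (hNf.mul hInv)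
  have hTm : Tm = fun q : ℝ × ℝ => (1 - q.1 * q.2, (1 - q.1) * (1 - q.1 * q.2)⁻¹) := by
    funext q; simp [Tm, div_eq_mul_inv]
  rw [hTm]
  unfold Tm'
  convert h using 1
  · rfl
  · rfl
  · rfl
  · rfl
  refine ContinuousLinearMap.ext fun v => ?_
  have hv : v = (v.1, v.2) := rfl
  rw [hv, mkL_apply]
  apply Prod.ext
  · simp
  · simp [ContinuousLinearMap.mulLeftRight_apply]
    field_simp
    ring

def Sq : Set (ℝ × ℝ) := Set.Ioo (0:ℝ) 1 ×ˢ Set.Ioo (0:ℝ) 1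

lemma Sq_meas : MeasurableSet Sq := measurableSet_Ioo.prod measurableSet_Ioo

lemma Tm_measurable : Measurable Tm := by unfold Tm; fun_prop

lemma Sq_facts {p : ℝ × ℝ} (hp : p ∈ Sq) :
    0 < p.1 ∧ p.1 < 1 ∧ 0 < p.2 ∧ p.2 < 1 ∧ 0 < 1 - p.1 * p.2 ∧ 1 - p.1 * p.2 < 1 ∧
      p.1 * p.2 < p.1 := by
  obtain ⟨⟨h1, h2⟩, h3, h4⟩ := hp
  have h : p.1 * p.2 < p.1 := mul_lt_of_lt_one_right h1 h4
  refine ⟨h1, h2, h3, h4, by nlinarith, by nlinarith, h⟩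

lemma Tm'_det {p : ℝ × ℝ} (hp : p ∈ Sq) :
    ENNReal.ofReal |(Tm' p).det| = ENNReal.ofReal (p.1 / (1 - p.1 * p.2)) := by
  obtain ⟨h1, h2, h3, h4, h5, h6, h7⟩ := Sq_facts hp
  rw [Tm', mkL_det]
  have hD : (1:ℝ) - p.1 * p.2 ≠ 0 := ne_of_gt h5
  have e : (-p.2) * (p.1 * (1 - p.1) / (1 - p.1 * p.2)^2)
      - (-p.1) * ((p.2 - 1) / (1 - p.1 * p.2)^2) = -(p.1 / (1 - p.1 * p.2)) := by
    have h2 : (-p.2) * (p.1 * (1 - p.1) / (1 - p.1 * p.2)^2)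
        - (-p.1) * ((p.2 - 1) / (1 - p.1 * p.2)^2)
        = (p.1 * (p.1 * p.2 - 1)) / (1 - p.1 * p.2)^2 := by ring
    rw [h2, div_eq_iff (pow_ne_zero 2 hD), sq, ← mul_assoc, neg_mul, div_mul_cancel₀ _ hD]
    ring
  rw [e, abs_neg, abs_of_pos (div_pos h1 h5)]

lemma Tm_mem {p : ℝ × ℝ} (hp : p ∈ Sq) : Tm p ∈ Sq := by
  obtain ⟨h1, h2, h3, h4, h5, h6, h7⟩ := Sq_facts hp
  refine ⟨⟨h5, h6⟩, div_pos (by linarith) h5, ?_⟩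
  show (1 - p.1) / (1 - p.1 * p.2) < 1
  rw [div_lt_one h5]; linarith

lemma Tm_invol {p : ℝ × ℝ} (hp : p ∈ Sq) : Tm (Tm p) = p := by
  obtain ⟨h1, h2, h3, h4, h5, h6, h7⟩ := Sq_facts hp
  unfold Tm
  have hD : (1 : ℝ) - p.1 * p.2 ≠ 0 := ne_of_gt h5
  have e1 : 1 - (1 - p.1 * p.2) * ((1 - p.1) / (1 - p.1 * p.2)) = p.1 := by
    field_simp
    ring
  apply Prod.ext
  · simpa using e1
  · simp only [e1]
    field_simp
    ring

lemma Tm_inj : Set.InjOn Tm Sq := fun a ha b hb h => by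
  rw [← Tm_invol ha, ← Tm_invol hb, h]

lemma Tm_image (s : Set (ℝ × ℝ)) : Tm ⁻¹' s ∩ Sq = Tm '' (s ∩ Sq) := by
  ext p
  constructor
  · rintro ⟨hps, hpS⟩
    exact ⟨Tm p, ⟨hps, Tm_mem hpS⟩, Tm_invol hpS⟩
  · rintro ⟨q, ⟨hqs, hqS⟩, rfl⟩
    exact ⟨by rw [Set.mem_preimage, Tm_invol hqS]; exact hqs, Tm_mem hqS⟩

/-! ### Key density identity -/

lemma key_identity (p₁ p₂ p₃ : ℝ) (hp₁ : 0 < p₁) (hp₂ : 0 < p₂) (hp₃ : 0 < p₃)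
    {u v : ℝ} (hu : u ∈ Set.Ioo (0:ℝ) 1) (hv : v ∈ Set.Ioo (0:ℝ) 1) :
    (u / (1 - u * v)) * (bD (p₁ + p₃) p₂ (1 - u * v) * bD p₃ p₁ ((1 - u) / (1 - u * v)))
      = bD (p₁ + p₂) p₃ u * bD p₂ p₁ v := by
  obtain ⟨hu0, hu1⟩ := hu
  obtain ⟨hv0, hv1⟩ := hv
  have huv : u * v < u := mul_lt_of_lt_one_right hu0 hv1
  have hD0 : 0 < 1 - u * v := by nlinarith
  have hD1 : 1 - u * v < 1 := by nlinarith
  have h1u : 0 < 1 - u := by linarith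
  have h1v : 0 < 1 - v := by linarith
  have hw0 : 0 < (1 - u) / (1 - u * v) := div_pos h1u hD0
  have hw1 : (1 - u) / (1 - u * v) < 1 := by rw [div_lt_one hD0]; linarith
  rw [bD, bD, bD, bD]
  simp only [Set.mem_Ioo]
  rw [if_pos (And.intro hD0 hD1), if_pos (And.intro hw0 hw1), if_pos (And.intro hu0 hu1),
    if_pos (And.intro hv0 hv1)]
  have e0 : 1 - (1 - u * v) = u * v := by ring
  have e1 : 1 - (1 - u) / (1 - u * v) = u * (1 - v) / (1 - u * v) := by
    field_simp; ring
  rw [e0, e1]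
  rw [Real.mul_rpow hu0.le hv0.le, Real.div_rpow h1u.le hD0.le,
    Real.div_rpow (by positivity) hD0.le, Real.mul_rpow hu0.le h1v.le]
  have eu : u ^ (p₁ + p₂ - 1) = u ^ (p₂ - 1) * u ^ (p₁ - 1) * u := by
    rw [show p₁ + p₂ - 1 = (p₂ - 1) + ((p₁ - 1) + 1) by ring, Real.rpow_add hu0,
      Real.rpow_add hu0, Real.rpow_one]; ring
  have eD : (1 - u * v) ^ (p₁ + p₃ - 1)
      = (1 - u * v) ^ (p₃ - 1) * (1 - u * v) ^ (p₁ - 1) * (1 - u * v) := by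
    rw [show p₁ + p₃ - 1 = (p₃ - 1) + ((p₁ - 1) + 1) by ring, Real.rpow_add hD0,
      Real.rpow_add hD0, Real.rpow_one]; ring
  rw [eu, eD]
  have hG1 : Real.Gamma (p₃ + p₁) = Real.Gamma (p₁ + p₃) := by rw [add_comm]
  have hG2 : Real.Gamma (p₂ + p₁) = Real.Gamma (p₁ + p₂) := by rw [add_comm]
  have hG3 : Real.Gamma (p₁ + p₃ + p₂) = Real.Gamma (p₁ + p₂ + p₃) := by ring_nf
  rw [hG1, hG2, hG3]
  have g1 := Real.Gamma_pos_of_pos hp₁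
  have g2 := Real.Gamma_pos_of_pos hp₂
  have g3 := Real.Gamma_pos_of_pos hp₃
  have g12 := Real.Gamma_pos_of_pos (add_pos hp₁ hp₂)
  have g13 := Real.Gamma_pos_of_pos (add_pos hp₁ hp₃)
  have g123 := Real.Gamma_pos_of_pos (add_pos (add_pos hp₁ hp₂) hp₃)
  have rD1 : (0:ℝ) < (1 - u * v) ^ (p₃ - 1) := Real.rpow_pos_of_pos hD0 _
  have rD2 : (0:ℝ) < (1 - u * v) ^ (p₁ - 1) := Real.rpow_pos_of_pos hD0 _
  field_simp

/-! ### Measure computations -/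

lemma prodD (f g : ℝ → ℝ≥0∞) (hf : Measurable f) (hg : Measurable g)
    (hf' : ∀ x, f x ≠ ∞) (hg' : ∀ x, g x ≠ ∞) :
    (volume.withDensity f).prod (volume.withDensity g)
      = ((volume : Measure ℝ).prod volume).withDensity (fun p => f p.1 * g p.2) := by
  haveI : SigmaFinite (volume.withDensity f) :=
    SigmaFinite.withDensity_of_ne_top (ae_of_all _ hf')
  haveI : SigmaFinite (volume.withDensity g) :=
    SigmaFinite.withDensity_of_ne_top (ae_of_all _ hg')
  refine Measure.prod_eq fun s t hs ht => ?_
  rw [withDensity_apply _ (hs.prod ht), ← Measure.prod_restrict,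
    lintegral_prod_mul hf.aemeasurable hg.aemeasurable,
    withDensity_apply _ hs, withDensity_apply _ ht]

lemma restrict_to_Sq (P : Measure (ℝ × ℝ)) (H : ℝ × ℝ → ℝ≥0∞)
    (hH : ∀ p ∉ Sq, H p = 0) (A : Set (ℝ × ℝ)) :
    ∫⁻ p in A, H p ∂P = ∫⁻ p in A ∩ Sq, H p ∂P := by
  have hind : Sq.indicator H = H := by
    funext p
    by_cases hp : p ∈ Sq
    · simp [Set.indicator_of_mem hp]
    · simp [Set.indicator_of_notMem hp, hH p hp]
  conv_lhs => rw [← hind]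
  rw [lintegral_indicator Sq_meas, Measure.restrict_restrict Sq_meas, Set.inter_comm]

lemma map_Tm (p₁ p₂ p₃ : ℝ) (hp₁ : 0 < p₁) (hp₂ : 0 < p₂) (hp₃ : 0 < p₃) :
    ((_root_.betaMeasure (p₁ + p₃) p₂).prod (_root_.betaMeasure p₃ p₁)).map Tm
      = (_root_.betaMeasure (p₁ + p₂) p₃).prod (_root_.betaMeasure p₂ p₁) := by
  rw [betaMeasure_eq, betaMeasure_eq, betaMeasure_eq, betaMeasure_eq,
    prodD _ _ ((bD_measurable _ _).ennreal_ofReal) ((bD_measurable _ _).ennreal_ofReal)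
      (fun x => ENNReal.ofReal_ne_top) (fun x => ENNReal.ofReal_ne_top),
    prodD _ _ ((bD_measurable _ _).ennreal_ofReal) ((bD_measurable _ _).ennreal_ofReal)
      (fun x => ENNReal.ofReal_ne_top) (fun x => ENNReal.ofReal_ne_top)]
  set P : Measure (ℝ × ℝ) := (volume : Measure ℝ).prod volume with hP
  set H : ℝ × ℝ → ℝ≥0∞ :=
    fun p => ENNReal.ofReal (bD (p₁ + p₃) p₂ p.1) * ENNReal.ofReal (bD p₃ p₁ p.2) with hH
  set K : ℝ × ℝ → ℝ≥0∞ :=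
    fun p => ENNReal.ofReal (bD (p₁ + p₂) p₃ p.1) * ENNReal.ofReal (bD p₂ p₁ p.2) with hK
  have hHmeas : Measurable H := by
    exact (((bD_measurable _ _).ennreal_ofReal).comp measurable_fst).mul
      (((bD_measurable _ _).ennreal_ofReal).comp measurable_snd)
  have hnot : ∀ p : ℝ × ℝ, p ∉ Sq → p.1 ∉ Set.Ioo (0:ℝ) 1 ∨ p.2 ∉ Set.Ioo (0:ℝ) 1 := by
    intro p hp
    by_contra h
    push_neg at h
    exact hp ⟨h.1, h.2⟩
  have hH0 : ∀ p ∉ Sq, H p = 0 := by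
    intro p hp
    rcases hnot p hp with h | h <;> simp [hH, bD_zero h]
  have hK0 : ∀ p ∉ Sq, K p = 0 := by
    intro p hp
    rcases hnot p hp with h | h <;> simp [hK, bD_zero h]
  ext s hs
  rw [Measure.map_apply Tm_measurable hs, withDensity_apply _ (Tm_measurable hs),
    withDensity_apply _ hs, restrict_to_Sq P H hH0, restrict_to_Sq P K hK0,
    Tm_image s,
    lintegral_image_eq_lintegral_abs_det_fderiv_mul P (hs.inter Sq_meas)
      (fun p hp => (hasFDerivAt_Tm p (ne_of_gt (Sq_facts hp.2).2.2.2.2.1)).hasFDerivWithinAt)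
      (Tm_inj.mono inter_subset_right) H]
  refine setLIntegral_congr_fun (hs.inter Sq_meas) (fun p hp => ?_)
  obtain ⟨hps, hpS⟩ := hp
  obtain ⟨h1, h2, h3, h4, h5, h6, h7⟩ := Sq_facts hpS
  rw [Tm'_det hpS]
  have kk := key_identity p₁ p₂ p₃ hp₁ hp₂ hp₃ (u := p.1) (v := p.2) ⟨h1, h2⟩ ⟨h3, h4⟩
  have ha : 0 ≤ bD (p₁ + p₃) p₂ (1 - p.1 * p.2) := bD_nonneg _ _ _ (add_pos hp₁ hp₃) hp₂
  have hx : 0 ≤ p.1 / (1 - p.1 * p.2) := (div_pos h1 h5).le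
  have hc : 0 ≤ bD (p₁ + p₂) p₃ p.1 := bD_nonneg _ _ _ (add_pos hp₁ hp₂) hp₃
  rw [hH, hK]
  simp only [Tm]
  rw [← ENNReal.ofReal_mul ha, ← ENNReal.ofReal_mul hx, ← ENNReal.ofReal_mul hc, kk]

end BetaIndepAux

theorem stmt_0 {Ω : Type*} [MeasurableSpace Ω] (μ : Measure Ω) [IsProbabilityMeasure μ]
    (X Y : Ω → ℝ) (hXm : Measurable X) (hYm : Measurable Y)
    (p₁ p₂ p₃ : ℝ) (hp₁ : 0 < p₁) (hp₂ : 0 < p₂) (hp₃ : 0 < p₃)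
    (hXr : ∀ ω, X ω ∈ Set.Ioo (0:ℝ) 1) (hYr : ∀ ω, Y ω ∈ Set.Ioo (0:ℝ) 1)
    (hX : μ.map X = _root_.betaMeasure (p₁ + p₃) p₂) (hY : μ.map Y = _root_.betaMeasure p₃ p₁)
    (hindep : IndepFun X Y μ) :
    IndepFun (fun ω => 1 - X ω * Y ω) (fun ω => (1 - X ω) / (1 - X ω * Y ω)) μ := by
  classical
  set U : Ω → ℝ := fun ω => 1 - X ω * Y ω with hUdef
  set V : Ω → ℝ := fun ω => (1 - X ω) / (1 - X ω * Y ω) with hVdef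
  have hUm : Measurable U := measurable_const.sub (hXm.mul hYm)
  have hVm : Measurable V :=
    (measurable_const.sub hXm).div (measurable_const.sub (hXm.mul hYm))
  have hXYm : Measurable fun ω => (X ω, Y ω) := hXm.prodMk hYm
  have hmapXY : μ.map (fun ω => (X ω, Y ω))
      = (_root_.betaMeasure (p₁ + p₃) p₂).prod (_root_.betaMeasure p₃ p₁) := by
    rw [← hX, ← hY]
    exact (indepFun_iff_map_prod_eq_prod_map_map hXm.aemeasurable hYm.aemeasurable).mp hindep
  have hcomp : (fun ω => (U ω, V ω)) = BetaIndepAux.Tm ∘ (fun ω => (X ω, Y ω)) := rfl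
  have hmapUV : μ.map (fun ω => (U ω, V ω))
      = (_root_.betaMeasure (p₁ + p₂) p₃).prod (_root_.betaMeasure p₂ p₁) := by
    rw [hcomp, ← Measure.map_map BetaIndepAux.Tm_measurable hXYm, hmapXY,
      BetaIndepAux.map_Tm p₁ p₂ p₃ hp₁ hp₂ hp₃]
  set ρ₁ := _root_.betaMeasure (p₁ + p₂) p₃ with hρ₁
  set ρ₂ := _root_.betaMeasure p₂ p₁ with hρ₂
  haveI hsf1 : SFinite ρ₁ := by
    rw [hρ₁, BetaIndepAux.betaMeasure_eq]; infer_instance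
  haveI hsf2 : SFinite ρ₂ := by
    rw [hρ₂, BetaIndepAux.betaMeasure_eq]; infer_instance
  have huniv : ρ₁ Set.univ * ρ₂ Set.univ = 1 := by
    have h1 : μ.map (fun ω => (U ω, V ω)) Set.univ = 1 := by
      rw [Measure.map_apply (hUm.prodMk hVm) MeasurableSet.univ]
      simp
    rw [hmapUV] at h1
    rwa [← Set.univ_prod_univ, Measure.prod_prod] at h1
  have hmapU : μ.map U = ρ₂ Set.univ • ρ₁ := by
    have h : U = Prod.fst ∘ (fun ω => (U ω, V ω)) := rfl
    rw [h, ← Measure.map_map measurable_fst (hUm.prodMk hVm), hmapUV,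
      Measure.map_fst_prod]
  have hmapV : μ.map V = ρ₁ Set.univ • ρ₂ := by
    have h : V = Prod.snd ∘ (fun ω => (U ω, V ω)) := rfl
    rw [h, ← Measure.map_map measurable_snd (hUm.prodMk hVm), hmapUV,
      Measure.map_snd_prod]
  have hsp : ∀ c d : ENNReal, (c • ρ₁).prod (d • ρ₂) = (c * d) • (ρ₁.prod ρ₂) := by
    intro c d
    ext s hs
    rw [Measure.prod_apply hs, Measure.smul_apply, Measure.prod_apply hs,
      lintegral_smul_measure]
    simp only [Measure.smul_apply, smul_eq_mul]
    rw [lintegral_const_mul _ (measurable_measure_prodMk_left hs)]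
    ring
  rw [indepFun_iff_map_prod_eq_prod_map_map hUm.aemeasurable hVm.aemeasurable,
    hmapUV, hmapU, hmapV, hsp, mul_comm, huniv, one_smul]
end

section
/- Let F, G, H, K : (0,1) → ℝ be continuous functions satisfying F(x) + G(y/(1-x)) = H(y) + K(x/(1-y)) for all (x,y) in D₀ = {(x,y) ∈ (0,1)² : x + y ∈ (0,1)}. Then there exist real constants κ₁, κ₂, κ₃ and C₁, C₂, C₃, C₄ with C₁ + C₂ = C₃ + C₄ such that F(x) = (κ₁+κ₃)·log(1-x) + κ₂·log x + C₁, G(x) = κ₁·log(1-x) + κ₃·log x + C₂, H(x) = (κ₁+κ₂)·log(1-x) + κ₃·log x + C₃, and K(x) = κ₁·log(1-x) + κ₂·log x + C₄ for all x ∈ (0,1). -/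
open Set Real Filter Topology

lemma add_cont_lin (g : ℝ → ℝ) (hg : Continuous g)
    (hadd : ∀ a b : ℝ, g (a + b) = g a + g b) : ∀ a : ℝ, g a = g 1 * a := by
  intro a
  have h := ((AddMonoidHom.mk' g hadd).toRealLinearMap hg).map_smul a 1
  change g (a • 1) = a • g 1 at h
  simp only [smul_eq_mul, mul_one, AddMonoidHom.mk'_apply] at h
  rw [h, mul_comm]

lemma mul_cont_log (L : ℝ → ℝ) (hcont : ∀ c : ℝ, 0 < c → ContinuousAt L c)
    (hadd : ∀ c d : ℝ, 0 < c → 0 < d → L (c * d) = L c + L d) :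
    ∀ c : ℝ, 0 < c → L c = L (exp 1) * log c := by
  have hg : Continuous (fun a : ℝ => L (exp a)) := by
    rw [continuous_iff_continuousAt]
    exact fun a => (hcont _ (exp_pos a)).comp (continuous_exp.continuousAt)
  have hga : ∀ a b : ℝ, L (exp (a + b)) = L (exp a) + L (exp b) := by
    intro a b; rw [exp_add]; exact hadd _ _ (exp_pos a) (exp_pos b)
  have h := add_cont_lin _ hg hga
  intro c hc
  have := h (log c)
  rwa [exp_log hc] at this

lemma jensen_log (P : ℝ → ℝ) (hP : ContinuousOn P (Ioi 0))
    (hA : ∀ a b : ℝ, 0 < a → 0 < b → a * b < 1 →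
      P a + P b = P (a * (1 + b) / (1 + a)) + P (b * (1 + a) / (1 + b))) :
    ∀ s : ℝ, 0 < s → P s = (P (exp 1) - P 1) * log s + P 1 := by
  -- step 1: hyperbola invariance
  have hW : ∀ k : ℝ, 0 < k → k < 1 → ∀ a : ℝ, 0 < a →
      P a + P (k / a) = 2 * P (Real.sqrt k) := by
    intro k hk hk1 a ha
    set σ := Real.sqrt k with hσdef
    have hσpos : 0 < σ := Real.sqrt_pos.mpr hk
    have hσsq : σ * σ = k := Real.mul_self_sqrt hk.le
    have hσ1 : σ < 1 := by
      nlinarith [hσsq]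
    set f : ℝ → ℝ := fun u => (u + k) / (1 + u) with hf
    set seq : ℕ → ℝ := fun n => f^[n] a with hseq
    have hseq0 : seq 0 = a := rfl
    have hseqS : ∀ n, seq (n + 1) = f (seq n) := by
      intro n; rw [hseq]; simp [Function.iterate_succ_apply']
    have hpos : ∀ n, 0 < seq n := by
      intro n; induction n with
      | zero => simpa [hseq0] using ha
      | succ n ih => rw [hseqS]; exact div_pos (by linarith) (by linarith)
    have hcontract : ∀ u : ℝ, 0 < u → |f u - σ| ≤ (1 - σ) * |u - σ| := by
      intro u hu
      have h1u : (0:ℝ) < 1 + u := by linarith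
      have hid : f u - σ = (u - σ) * (1 - σ) / (1 + u) := by
        rw [hf]; field_simp; nlinarith [hσsq]
      rw [hid, abs_div, abs_mul, abs_of_pos h1u, abs_of_pos (by linarith : (0:ℝ) < 1 - σ)]
      rw [div_le_iff₀ h1u]
      have habs : (0:ℝ) ≤ |u - σ| := abs_nonneg _
      nlinarith [mul_nonneg (mul_nonneg (by linarith : (0:ℝ) ≤ 1 - σ) habs) hu.le]
    have hbound : ∀ n, |seq n - σ| ≤ (1 - σ) ^ n * |a - σ| := by
      intro n; induction n with
      | zero => simp [hseq0]
      | succ n ih =>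
        rw [hseqS]
        calc |f (seq n) - σ| ≤ (1 - σ) * |seq n - σ| := hcontract _ (hpos n)
          _ ≤ (1 - σ) * ((1 - σ) ^ n * |a - σ|) := by
              apply mul_le_mul_of_nonneg_left ih (by linarith)
          _ = (1 - σ) ^ (n + 1) * |a - σ| := by ring
    have htend : Tendsto seq atTop (nhds σ) := by
      have h0 : Tendsto (fun n : ℕ => (1 - σ) ^ n * |a - σ|) atTop (nhds 0) := by
        have : Tendsto (fun n : ℕ => (1 - σ) ^ n) atTop (nhds 0) :=
          tendsto_pow_atTop_nhds_zero_of_lt_one (by linarith) (by linarith)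
        simpa using this.mul_const |a - σ|
      have h1 : Tendsto (fun n => |seq n - σ|) atTop (nhds 0) :=
        squeeze_zero (fun n => abs_nonneg _) hbound h0
      rw [tendsto_iff_dist_tendsto_zero]
      simpa [Real.dist_eq] using h1
    have hinv : ∀ n, P (seq n) + P (k / seq n) = P a + P (k / a) := by
      intro n; induction n with
      | zero => rw [hseq0]
      | succ n ih =>
        rw [hseqS, ← ih]
        have hu := hpos n
        have hune : seq n ≠ 0 := ne_of_gt hu
        have h1u : (1:ℝ) + seq n ≠ 0 := by positivity
        have huk : seq n + k ≠ 0 := by positivity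
        have hb : 0 < k / seq n := div_pos hk hu
        have hab : seq n * (k / seq n) < 1 := by
          rw [mul_div_cancel₀ _ hune]; exact hk1
        have this1 := hA (seq n) (k / seq n) hu hb hab
        have hfu : f (seq n) = (seq n + k) / (1 + seq n) := by rw [hf]
        have e1 : seq n * (1 + k / seq n) / (1 + seq n) = (seq n + k) / (1 + seq n) := by
          field_simp
        have e2 : (k / seq n) * (1 + seq n) / (1 + k / seq n)
            = k / ((seq n + k) / (1 + seq n)) := by
          rw [div_div_eq_mul_div, div_mul_eq_mul_div]
          field_simp
          try ring
        rw [e1, e2] at this1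
        rw [hfu]
        linarith
    -- continuity at σ
    have hPat : ∀ u : ℝ, 0 < u → ContinuousAt P u := fun u hu =>
      hP.continuousAt (isOpen_Ioi.mem_nhds hu)
    have hdivσ : k / σ = σ := by
      field_simp [ne_of_gt hσpos]; nlinarith [hσsq]
    have hcat : ContinuousAt (fun u => P u + P (k / u)) σ := by
      apply ContinuousAt.add (hPat σ hσpos)
      have : ContinuousAt (fun u : ℝ => k / u) σ :=
        continuousAt_const.div continuousAt_id (ne_of_gt hσpos)
      exact ContinuousAt.comp (by rw [hdivσ]; exact hPat σ hσpos) this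
    have hlim : Tendsto (fun n => P (seq n) + P (k / seq n)) atTop
        (nhds (P σ + P (k / σ))) := (hcat.tendsto).comp htend
    have hconst : Tendsto (fun n => P (seq n) + P (k / seq n)) atTop
        (nhds (P a + P (k / a))) := by
      simp only [hinv]; exact tendsto_const_nhds
    have := tendsto_nhds_unique hconst hlim
    rw [this, hdivσ]; ring
  -- step 2: full Jensen
  have hS5 : ∀ a b : ℝ, 0 < a → 0 < b → P a + P b = 2 * P (Real.sqrt (a * b)) := by
    intro a b ha hb
    by_cases hab : a * b < 1
    · have := hW (a * b) (mul_pos ha hb) hab a ha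
      rwa [mul_div_cancel_left₀ _ (ne_of_gt ha)] at this
    · set c : ℝ := 1 / ((1 + a) * (1 + b)) with hc
      have hcpos : 0 < c := by positivity
      have hac : a * c < 1 := by
        rw [hc, mul_one_div, div_lt_one (by positivity)]; nlinarith
      have hbc : b * c < 1 := by
        rw [hc, mul_one_div, div_lt_one (by positivity)]; nlinarith
      have hsab : Real.sqrt (a * b) * Real.sqrt (a * b) = a * b :=
        Real.mul_self_sqrt (by positivity)
      have hsabpos : 0 < Real.sqrt (a * b) := Real.sqrt_pos.mpr (by positivity)
      have habc : Real.sqrt (a * b) * c < 1 := by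
        rw [hc, mul_one_div, div_lt_one (by positivity)]
        nlinarith [sq_nonneg (Real.sqrt (a * b) - 1), sq_nonneg (a - b)]
      have e1 := hW (a * c) (by positivity) hac a ha
      have e2 := hW (b * c) (by positivity) hbc b hb
      have e4 := hW (Real.sqrt (a * b) * c) (by positivity) habc (Real.sqrt (a*b)) hsabpos
      have hacd : a * c / a = c := mul_div_cancel_left₀ _ (ne_of_gt ha)
      have hbcd : b * c / b = c := mul_div_cancel_left₀ _ (ne_of_gt hb)
      have hsd : Real.sqrt (a * b) * c / Real.sqrt (a * b) = c :=
        mul_div_cancel_left₀ _ (ne_of_gt hsabpos)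
      rw [hacd] at e1; rw [hbcd] at e2; rw [hsd] at e4
      have hsacp : 0 < Real.sqrt (a * c) := Real.sqrt_pos.mpr (by positivity)
      have hsbcp : 0 < Real.sqrt (b * c) := Real.sqrt_pos.mpr (by positivity)
      have hprod : Real.sqrt (a * c) * Real.sqrt (b * c) = Real.sqrt (a * b) * c := by
        have hr : (a * c) * (b * c) = (a * b) * c ^ 2 := by ring
        rw [← Real.sqrt_mul (by positivity), hr, Real.sqrt_mul (by positivity),
          Real.sqrt_sq hcpos.le]
      have hprod1 : Real.sqrt (a * c) * Real.sqrt (b * c) < 1 := by rw [hprod]; exact habc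
      have e3 := hW (Real.sqrt (a * c) * Real.sqrt (b * c)) (by positivity) hprod1
        (Real.sqrt (a * c)) hsacp
      rw [mul_div_cancel_left₀ _ (ne_of_gt hsacp)] at e3
      rw [hprod] at e3
      linarith
  -- step 3: Cauchy
  have hexp2 : ∀ α β : ℝ, Real.sqrt (exp α * exp β) = exp ((α + β) / 2) := by
    intro α β
    rw [← exp_add]
    have : exp (α + β) = exp ((α + β) / 2) * exp ((α + β) / 2) := by
      rw [← exp_add]; ring_nf
    rw [this, Real.sqrt_mul_self (exp_pos _).le]
  have hjen : ∀ α β : ℝ, P (exp α) + P (exp β) = 2 * P (exp ((α + β) / 2)) := by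
    intro α β
    have := hS5 (exp α) (exp β) (exp_pos _) (exp_pos _)
    rwa [hexp2] at this
  set g : ℝ → ℝ := fun α => P (exp α) - P (exp 0) with hg
  have hgadd : ∀ α β : ℝ, g (α + β) = g α + g β := by
    intro α β
    have h1 := hjen (α + β) 0
    have h2 := hjen α β
    rw [hg]; simp only []
    have : (α + β + 0) / 2 = (α + β) / 2 := by ring
    rw [this] at h1
    linarith
  have hgcont : Continuous g := by
    apply Continuous.sub _ continuous_const
    rw [continuous_iff_continuousAt]
    intro α
    exact ContinuousAt.comp (hP.continuousAt (isOpen_Ioi.mem_nhds (exp_pos α)))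
      continuous_exp.continuousAt
  have hlin := add_cont_lin g hgcont hgadd
  intro s hs
  have := hlin (log s)
  rw [hg] at this
  simp only [exp_log hs, exp_zero] at this
  linarith [this]

lemma const_of_sq_sym (D : ℝ → ℝ) (hD : ContinuousOn D (Ioo 0 1))
    (hsym : ∀ x ∈ Ioo (0:ℝ) 1, D x = D (1 - x))
    (hsq : ∀ x ∈ Ioo (0:ℝ) 1, D x = D (x ^ 2)) :
    ∀ x ∈ Ioo (0:ℝ) 1, ∀ y ∈ Ioo (0:ℝ) 1, D x = D y := by
  classical
  -- iterated square root in exp/log form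
  have keyA : ∀ u : ℝ, u ∈ Ioo (0:ℝ) 1 → ∀ m : ℕ,
      exp (log u * (1/2) ^ m) ∈ Ioo (0:ℝ) 1 ∧ D (exp (log u * (1/2) ^ m)) = D u := by
    intro u hu m
    have hlogu : log u < 0 := log_neg hu.1 hu.2
    induction m with
    | zero =>
      simp only [pow_zero, mul_one, exp_log hu.1]
      exact ⟨hu, trivial⟩
    | succ m ih =>
      have hmem : exp (log u * (1/2) ^ (m+1)) ∈ Ioo (0:ℝ) 1 := by
        constructor
        · exact exp_pos _
        · rw [exp_lt_one_iff]
          have : (0:ℝ) < (1/2) ^ (m+1) := by positivity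
          nlinarith
      refine ⟨hmem, ?_⟩
      have hsqr : (exp (log u * (1/2) ^ (m+1))) ^ 2 = exp (log u * (1/2) ^ m) := by
        rw [sq, ← exp_add]
        congr 1
        rw [pow_succ]
        ring
      rw [hsq _ hmem, hsqr, ih.2]
  intro x hx y hy
  set T : ℝ := 1 - y with hT
  have hTmem : T ∈ Ioo (0:ℝ) 1 := ⟨by linarith [hy.2], by linarith [hy.1]⟩
  -- sequence xs n -> 1 from below, D-invariant
  set xs : ℕ → ℝ := fun n => exp (log x * (1/2) ^ n) with hxs
  have hxsmem : ∀ n, xs n ∈ Ioo (0:ℝ) 1 := fun n => (keyA x hx n).1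
  have hxsD : ∀ n, D (xs n) = D x := fun n => (keyA x hx n).2
  have hxsD' : ∀ n, D (1 - xs n) = D x := by
    intro n; rw [← hsym _ (hxsmem n), hxsD]
  have h1xsmem : ∀ n, (1 - xs n) ∈ Ioo (0:ℝ) 1 := by
    intro n; exact ⟨by linarith [(hxsmem n).2], by linarith [(hxsmem n).1]⟩
  -- q m n
  set q : ℕ → ℕ → ℝ := fun m n => exp (log (1 - xs n) * (1/2) ^ m) with hq
  have hqmem : ∀ m n, q m n ∈ Ioo (0:ℝ) 1 := fun m n => (keyA _ (h1xsmem n) m).1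
  have hqD : ∀ m n, D (q m n) = D x := by
    intro m n; rw [(keyA _ (h1xsmem n) m).2]; exact hxsD' n
  -- ratio bound: q m (n+1) ≥ q m n * exp (log (1/2) * (1/2)^m)
  have hratio : ∀ m n, q m n * exp (log (1/2) * (1/2) ^ m) ≤ q m (n+1) := by
    intro m n
    rw [hq]
    simp only []
    rw [← exp_add, exp_le_exp]
    have key : log (1 - xs n) + log (1/2) ≤ log (1 - xs (n+1)) := by
      rw [← log_mul (by linarith [(h1xsmem n).1] : (1 - xs n) ≠ 0) (by norm_num)]
      apply log_le_log (by nlinarith [(h1xsmem n).1])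
      -- (1 - xs n) * (1/2) ≤ 1 - xs (n+1), since xs(n+1)^2 = xs n
      have hsq1 : (xs (n+1)) ^ 2 = xs n := by
        rw [hxs]; simp only []
        rw [sq, ← exp_add]; congr 1; rw [pow_succ]; ring
      nlinarith [(hxsmem (n+1)).2, (hxsmem (n+1)).1, sq_nonneg (1 - xs (n+1))]
    calc log (1 - xs n) * (1/2)^m + log (1/2) * (1/2)^m
        = (log (1 - xs n) + log (1/2)) * (1/2)^m := by ring
      _ ≤ log (1 - xs (n+1)) * (1/2)^m := by
          apply mul_le_mul_of_nonneg_right key (by positivity)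
  -- q m n -> 0 in n
  have hqtend : ∀ m, Tendsto (fun n => q m n) atTop (nhds 0) := by
    intro m
    have h1 : Tendsto (fun n => xs n) atTop (nhds 1) := by
      rw [hxs]
      have : Tendsto (fun n : ℕ => log x * (1/2) ^ n) atTop (nhds 0) := by
        simpa using (tendsto_pow_atTop_nhds_zero_of_lt_one
          (by norm_num : (0:ℝ) ≤ 1/2) (by norm_num : (1/2:ℝ) < 1)).const_mul (log x)
      simpa [Function.comp_def] using (Real.continuous_exp.continuousAt (x := 0)).tendsto.comp this
    have h2 : Tendsto (fun n => 1 - xs n) atTop (nhds 0) := by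
      simpa using (tendsto_const_nhds (x := (1:ℝ))).sub h1
    have h2' : Tendsto (fun n => 1 - xs n) atTop (𝓝[>] (0:ℝ)) := by
      rw [tendsto_nhdsWithin_iff]
      exact ⟨h2, Eventually.of_forall fun n => (h1xsmem n).1⟩
    have h3 : Tendsto (fun n => log (1 - xs n)) atTop atBot :=
      Real.tendsto_log_nhdsGT_zero.comp h2'
    have h4 : Tendsto (fun n => log (1 - xs n) * (1/2) ^ m) atTop atBot := by
      apply Tendsto.atBot_mul_const (by positivity : (0:ℝ) < (1/2)^m) h3
    exact Real.tendsto_exp_atBot.comp h4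
  -- the ratio factor
  set ρ : ℕ → ℝ := fun m => exp (log (1/2) * (1/2) ^ m) with hρ
  have hρpos : ∀ m, 0 < ρ m := fun m => exp_pos _
  have hρlt1 : ∀ m, ρ m < 1 := by
    intro m
    rw [hρ]; simp only []
    rw [exp_lt_one_iff]
    have h1 : log (1/2 : ℝ) < 0 := log_neg (by norm_num) (by norm_num)
    have h2 : (0:ℝ) < (1/2) ^ m := by positivity
    nlinarith
  have hρtend : Tendsto ρ atTop (nhds 1) := by
    rw [hρ]
    have h0 : Tendsto (fun m : ℕ => log (1/2) * (1/2) ^ m) atTop (nhds 0) := by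
      simpa using (tendsto_pow_atTop_nhds_zero_of_lt_one
        (by norm_num : (0:ℝ) ≤ 1/2) (by norm_num : (1/2:ℝ) < 1)).const_mul (log (1/2))
    simpa [Function.comp_def] using (Real.continuous_exp.continuousAt (x := 0)).tendsto.comp h0
  -- q m 0 -> 1
  have hq0 : ∀ m, q m 0 = exp (log (1 - x) * (1/2) ^ m) := by
    intro m
    have : xs 0 = x := by rw [hxs]; simp [exp_log hx.1]
    rw [hq]; simp only []; rw [this]
  have hq0tend : Tendsto (fun m => q m 0) atTop (nhds 1) := by
    simp only [hq0]
    have h0 : Tendsto (fun m : ℕ => log (1 - x) * (1/2) ^ m) atTop (nhds 0) := by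
      simpa using (tendsto_pow_atTop_nhds_zero_of_lt_one
        (by norm_num : (0:ℝ) ≤ 1/2) (by norm_num : (1/2:ℝ) < 1)).const_mul (log (1 - x))
    simpa [Function.comp_def] using (Real.continuous_exp.continuousAt (x := 0)).tendsto.comp h0
  -- main estimate
  have hmain : ∀ δ : ℝ, 0 < δ → |D x - D T| < δ := by
    intro δ hδ
    obtain ⟨ε, hε, hcont⟩ := Metric.continuousAt_iff.mp
      (hD.continuousAt (isOpen_Ioo.mem_nhds hTmem)) δ hδ
    have ev1 : ∀ᶠ m in atTop, T < q m 0 :=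
      hq0tend.eventually (eventually_gt_nhds hTmem.2)
    have ev2 : ∀ᶠ m in atTop, (1 - ρ m) * T < ε := by
      have : Tendsto (fun m => (1 - ρ m) * T) atTop (nhds ((1 - 1) * T)) :=
        ((tendsto_const_nhds.sub hρtend).mul_const T)
      simp only [sub_self, zero_mul] at this
      exact this.eventually (eventually_lt_nhds hε)
    obtain ⟨m, hm1, hm2⟩ := (ev1.and ev2).exists
    have hexn : ∃ n, q m n ≤ T := by
      obtain ⟨n, hn⟩ := ((hqtend m).eventually (eventually_lt_nhds hTmem.1)).exists
      exact ⟨n, hn.le⟩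
    set N := Nat.find hexn with hN
    have hqN : q m N ≤ T := Nat.find_spec hexn
    have hN0 : N ≠ 0 := by
      intro h0
      rw [h0] at hqN
      exact absurd hqN (not_le.mpr hm1)
    obtain ⟨N', hN'⟩ : ∃ N', N = N' + 1 := ⟨N - 1, (Nat.succ_pred_eq_of_pos (Nat.pos_of_ne_zero hN0)).symm⟩
    have hqN' : T < q m N' := by
      have := Nat.find_min hexn (by omega : N' < N)
      linarith [not_le.mp this]
    have hlow : T * ρ m < q m N := by
      have h1 := hratio m N'
      rw [← hN'] at h1
      calc T * ρ m < q m N' * ρ m := by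
            apply mul_lt_mul_of_pos_right hqN' (hρpos m)
        _ ≤ q m N := h1
    have hdist : dist (q m N) T < ε := by
      rw [Real.dist_eq, abs_of_nonpos (by linarith), neg_sub]
      calc T - q m N < T - T * ρ m := by linarith
        _ = (1 - ρ m) * T := by ring
        _ < ε := hm2
    have := hcont hdist
    rw [Real.dist_eq] at this
    rw [hqD m N] at this
    exact this
  have hxT : D x = D T := by
    by_contra hne
    have hpos : 0 < |D x - D T| := abs_pos.mpr (sub_ne_zero.mpr hne)
    exact lt_irrefl _ (hmain _ hpos)
  rw [hxT, hT, ← hsym y hy]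

lemma hmul_pos : ∀ d : ℝ, 0 < d → Filter.Tendsto (fun x : ℝ => d * x) (nhdsWithin 0 (Ioi 0)) (nhdsWithin 0 (Ioi 0)) := by
  intro d hd
  apply tendsto_nhdsWithin_of_tendsto_nhds_of_eventually_within
  · have h0 : Filter.Tendsto (fun x : ℝ => d * x) (nhds 0) (nhds (d * 0)) :=
      (continuous_const.mul continuous_id).tendsto 0
    rw [mul_zero] at h0
    exact h0.mono_left nhdsWithin_le_nhds
  · exact eventually_nhdsWithin_of_forall (fun x hx => mul_pos hd hx)

lemma step_L (K F₁ : ℝ → ℝ) (hKc : ContinuousOn K (Ioo 0 1))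
    (hF₁c : ContinuousOn F₁ (Ioo 0 1))
    (hC2 : ∀ x y : ℝ, x ∈ Ioo (0:ℝ) 1 → y ∈ Ioo (0:ℝ) 1 → x + y < 1 →
      F₁ x - F₁ y = K (x / (1 - y)) - K (y / (1 - x))) :
    ∃ κ₂ c₁ : ℝ, ∀ b : ℝ, b ∈ Ioo (0:ℝ) 1 → F₁ b = K b + κ₂ * log (1-b) - c₁ := by
  have hKat : ∀ u : ℝ, u ∈ Ioo (0:ℝ) 1 → ContinuousAt K u := fun u hu =>
    hKc.continuousAt (isOpen_Ioo.mem_nhds hu)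
  have hF₁at : ∀ u : ℝ, u ∈ Ioo (0:ℝ) 1 → ContinuousAt F₁ u := fun u hu =>
    hF₁c.continuousAt (isOpen_Ioo.mem_nhds hu)
  have hmul := hmul_pos
  -- general limit identity at 0
  have hC2lim : ∀ lam mu : ℝ, 1 < lam → 1 < mu →
      Tendsto (fun x => K (mu * x) - K (lam * x)) (𝓝[>] (0:ℝ))
        (𝓝 (F₁ (1 - 1/lam) - F₁ (1 - 1/mu) + K (1 - 1/mu) - K (1 - 1/lam))) := by
    intro lam mu hlam hmu
    have hlam0 : (0:ℝ) < lam := by linarith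
    have hmu0 : (0:ℝ) < mu := by linarith
    have hil : 1/lam < 1 := by rw [div_lt_one hlam0]; linarith
    have him : 1/mu < 1 := by rw [div_lt_one hmu0]; linarith
    have hil0 : 0 < 1/lam := by positivity
    have him0 : 0 < 1/mu := by positivity
    have hbl : (1 - 1/lam) ∈ Ioo (0:ℝ) 1 := ⟨by linarith, by linarith⟩
    have hbm : (1 - 1/mu) ∈ Ioo (0:ℝ) 1 := ⟨by linarith, by linarith⟩
    have hid : ∀ x : ℝ, x ∈ Ioo (0:ℝ) (min (1/lam) (1/mu)) →
        K (mu * x) - K (lam * x)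
          = F₁ (1 - 1/lam) - F₁ (1 - 1/mu)
            + K ((1 - 1/mu) / (1 - x)) - K ((1 - 1/lam) / (1 - x)) := by
      intro x hx
      have hx0 : 0 < x := hx.1
      have hxl : x < 1/lam := lt_of_lt_of_le hx.2 (min_le_left _ _)
      have hxm : x < 1/mu := lt_of_lt_of_le hx.2 (min_le_right _ _)
      have hxmem : x ∈ Ioo (0:ℝ) 1 := ⟨hx0, by linarith⟩
      have e1 := hC2 x (1 - 1/lam) hxmem hbl (by linarith)
      have e2 := hC2 x (1 - 1/mu) hxmem hbm (by linarith)
      have ha1 : x / (1 - (1 - 1/lam)) = lam * x := by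
        rw [sub_sub_cancel, div_div_eq_mul_div, div_one, mul_comm]
      have ha2 : x / (1 - (1 - 1/mu)) = mu * x := by
        rw [sub_sub_cancel, div_div_eq_mul_div, div_one, mul_comm]
      rw [ha1] at e1
      rw [ha2] at e2
      linarith [e1, e2]
    have hRHS : Tendsto (fun x => F₁ (1 - 1/lam) - F₁ (1 - 1/mu)
        + K ((1 - 1/mu) / (1 - x)) - K ((1 - 1/lam) / (1 - x))) (𝓝[>] (0:ℝ))
        (𝓝 (F₁ (1 - 1/lam) - F₁ (1 - 1/mu) + K (1 - 1/mu) - K (1 - 1/lam))) := by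
      have hgen : ∀ b : ℝ, b ∈ Ioo (0:ℝ) 1 →
          Tendsto (fun x : ℝ => K (b / (1 - x))) (𝓝[>] (0:ℝ)) (𝓝 (K b)) := by
        intro b hb
        have hin : Tendsto (fun x : ℝ => b / (1 - x)) (𝓝 (0:ℝ)) (𝓝 b) := by
          have : Tendsto (fun x : ℝ => b / (1 - x)) (𝓝 0) (𝓝 (b / (1 - 0))) := by
            apply Tendsto.div tendsto_const_nhds
            · exact (continuous_const.sub continuous_id).tendsto 0
            · norm_num
          simpa using this
        exact ((hKat b hb).tendsto.comp hin).mono_left nhdsWithin_le_nhds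
      have t1 := hgen _ hbm
      have t2 := hgen _ hbl
      exact ((tendsto_const_nhds (x := F₁ (1 - 1/lam) - F₁ (1 - 1/mu))).add t1).sub t2
    apply hRHS.congr'
    have hminpos : 0 < min (1/lam) (1/mu) := lt_min hil0 him0
    filter_upwards [Ioo_mem_nhdsGT_of_mem (left_mem_Ico.mpr hminpos)] with x hx
    exact (hid x hx).symm
  -- the limit function at 0 and its properties
  set Lf : ℝ → ℝ := fun c =>
    F₁ (1/(1+c)) - F₁ (c/(1+c)) + K (c/(1+c)) - K (1/(1+c)) with hLfdef
  have hLlim : ∀ c : ℝ, 0 < c →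
      Tendsto (fun x => K (c * x) - K x) (𝓝[>] (0:ℝ)) (𝓝 (Lf c)) := by
    intro c hc
    have h1c : (0:ℝ) < 1 + c := by linarith
    have hlam : (1:ℝ) < (1+c)/c := by rw [lt_div_iff₀ hc]; linarith
    have hmu : (1:ℝ) < 1 + c := by linarith
    have hlam0 : (0:ℝ) < (1+c)/c := by positivity
    have h := (hC2lim ((1+c)/c) (1+c) hlam hmu).comp (hmul (1/((1+c)/c)) (by positivity))
    have harg1 : (1:ℝ) - 1/((1+c)/c) = 1/(1+c) := by
      rw [one_div_div]; field_simp; ring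
    have harg2 : (1:ℝ) - 1/(1+c) = c/(1+c) := by field_simp; ring
    rw [harg1, harg2] at h
    have hcne : c ≠ 0 := ne_of_gt hc
    have h1cne : (1+c : ℝ) ≠ 0 := ne_of_gt h1c
    have e1 : ∀ x : ℝ, (1+c) * (1/((1+c)/c) * x) = c * x := by
      intro x; rw [one_div_div]; field_simp
    have e2 : ∀ x : ℝ, (1+c)/c * (1/((1+c)/c) * x) = x := by
      intro x; rw [one_div_div]; field_simp
    apply h.congr
    intro x
    simp only [Function.comp_apply]
    rw [e1, e2]
  have hLadd : ∀ c d : ℝ, 0 < c → 0 < d → Lf (c * d) = Lf c + Lf d := by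
    intro c d hc hd
    have t1 := (hLlim c hc).comp (hmul d hd)
    have t2 := hLlim d hd
    have t12 := t1.add t2
    have heqf : ∀ x : ℝ, ((fun x => K (c * x) - K x) ∘ (fun x => d * x)) x
        + (K (d * x) - K x) = K (c * d * x) - K x := by
      intro x
      simp only [Function.comp_apply]
      rw [← mul_assoc]
      ring
    exact tendsto_nhds_unique (hLlim (c * d) (mul_pos hc hd)) (t12.congr heqf)
  have hLcont : ∀ c : ℝ, 0 < c → ContinuousAt Lf c := by
    intro c hc
    have h1c : (1:ℝ) + c ≠ 0 := by positivity
    have hu : ContinuousAt (fun c : ℝ => 1/(1+c)) c :=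
      ContinuousAt.div continuousAt_const (by fun_prop) h1c
    have hv : ContinuousAt (fun c : ℝ => c/(1+c)) c :=
      ContinuousAt.div continuousAt_id (by fun_prop) h1c
    have humem : 1/(1+c) ∈ Ioo (0:ℝ) 1 :=
      ⟨by positivity, by rw [div_lt_one (by linarith)]; linarith⟩
    have hvmem : c/(1+c) ∈ Ioo (0:ℝ) 1 :=
      ⟨by positivity, by rw [div_lt_one (by linarith)]; linarith⟩
    rw [hLfdef]
    have c1 := ContinuousAt.comp (g := F₁) (f := fun c : ℝ => 1/(1+c)) (x := c)
      (hF₁at _ humem) hu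
    have c2 := ContinuousAt.comp (g := F₁) (f := fun c : ℝ => c/(1+c)) (x := c)
      (hF₁at _ hvmem) hv
    have c3 := ContinuousAt.comp (g := K) (f := fun c : ℝ => c/(1+c)) (x := c)
      (hKat _ hvmem) hv
    have c4 := ContinuousAt.comp (g := K) (f := fun c : ℝ => 1/(1+c)) (x := c)
      (hKat _ humem) hu
    exact ((c1.sub c2).add c3).sub c4
  have hLform := mul_cont_log Lf hLcont hLadd
  set κ₂ : ℝ := Lf (exp 1) with hκ₂def
  have hωrel : ∀ b : ℝ, b ∈ Ioo (0:ℝ) 1 → ∀ b' : ℝ, b' ∈ Ioo (0:ℝ) 1 →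
      F₁ b' - F₁ b + K b - K b' = κ₂ * (log (1-b') - log (1-b)) := by
    intro b hb b' hb'
    have h1b : (0:ℝ) < 1 - b := by linarith [hb.2]
    have h1b' : (0:ℝ) < 1 - b' := by linarith [hb'.2]
    set lam : ℝ := 1/(1-b') with hlamdef
    set mu : ℝ := 1/(1-b) with hmudef
    have hlampos : 0 < lam := by rw [hlamdef]; positivity
    have hmupos : 0 < mu := by rw [hmudef]; positivity
    have hlam1 : 1 < lam := by
      rw [hlamdef, lt_div_iff₀ h1b']; linarith [hb'.1]
    have hmu1 : 1 < mu := by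
      rw [hmudef, lt_div_iff₀ h1b]; linarith [hb.1]
    have t1 := hC2lim lam mu hlam1 hmu1
    have e1 : 1 - 1/lam = b' := by rw [hlamdef, one_div_one_div]; ring
    have e2 : 1 - 1/mu = b := by rw [hmudef, one_div_one_div]; ring
    rw [e1, e2] at t1
    have t2' := (hLlim (mu/lam) (by positivity)).comp (hmul lam hlampos)
    have heqf : ∀ x : ℝ, ((fun y => K ((mu/lam)*y) - K y) ∘ (fun x => lam * x)) x
        = K (mu * x) - K (lam * x) := by
      intro x
      simp only [Function.comp_apply]
      congr 2
      field_simp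
    have t2 := t2'.congr heqf
    have huniq := tendsto_nhds_unique t1 t2
    rw [hLform (mu/lam) (by positivity)] at huniq
    rw [huniq]
    have hlog : log (mu/lam) = log (1-b') - log (1-b) := by
      rw [log_div (ne_of_gt hmupos) (ne_of_gt hlampos), hlamdef, hmudef,
        one_div, one_div, log_inv, log_inv]
      ring
    rw [hlog]
  refine ⟨κ₂, K (1/2) - F₁ (1/2) + κ₂ * log (1 - 1/2), ?_⟩
  intro b hb
  have h := hωrel b hb (1/2) (by norm_num)
  rw [mul_sub] at h
  linarith [h]

lemma step_Lam (K₀ : ℝ → ℝ) (hc : ContinuousOn K₀ (Ioo 0 1))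
    (hI' : ∀ x y : ℝ, x ∈ Ioo (0:ℝ) 1 → y ∈ Ioo (0:ℝ) 1 → x + y < 1 →
      K₀ x - K₀ y = K₀ (x/(1-y)) - K₀ (y/(1-x))) :
    ∃ κ₁ c₄ : ℝ, ∀ v : ℝ, v ∈ Ioo (0:ℝ) 1 → K₀ v = κ₁ * log (1-v) + c₄ := by
  have hK₀at : ∀ u : ℝ, u ∈ Ioo (0:ℝ) 1 → ContinuousAt K₀ u := fun u hu =>
    hc.continuousAt (isOpen_Ioo.mem_nhds hu)
  set Λf : ℝ → ℝ := fun c => K₀ (1/(1+c)) - K₀ (c/(1+c)) with hΛfdef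
  have hshrink : ∀ d : ℝ, 0 < d →
      Tendsto (fun u : ℝ => 1 - d*(1-u)) (𝓝[<] (1:ℝ)) (𝓝[<] (1:ℝ)) := by
    intro d hd
    apply tendsto_nhdsWithin_of_tendsto_nhds_of_eventually_within
    · have h0 : Tendsto (fun u : ℝ => 1 - d*(1-u)) (𝓝 1) (𝓝 (1 - d*(1-1))) :=
        (continuous_const.sub (continuous_const.mul (continuous_const.sub continuous_id))).tendsto 1
      simp only [sub_self, mul_zero, sub_zero] at h0
      exact h0.mono_left nhdsWithin_le_nhds
    · apply eventually_nhdsWithin_of_forall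
      intro u hu
      have : (0:ℝ) < 1 - u := by simpa using hu
      have : 0 < d * (1-u) := mul_pos hd this
      simp only [mem_Iio]
      linarith
  have hΛlim : ∀ c : ℝ, 0 < c →
      Tendsto (fun u => K₀ (1 - c*(1-u)) - K₀ u) (𝓝[<] (1:ℝ)) (𝓝 (Λf c)) := by
    intro c hc
    have h1c : (0:ℝ) < 1 + c := by linarith
    have h1cne : (1+c:ℝ) ≠ 0 := ne_of_gt h1c
    have hcne : c ≠ 0 := ne_of_gt hc
    set u₀ : ℝ := max (1/2) (1 - 1/c) with hu₀def
    have hu₀1 : u₀ < 1 := by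
      rw [hu₀def]
      apply max_lt (by norm_num)
      have : 0 < 1/c := by positivity
      linarith
    have hu₀pos : 0 < u₀ := lt_of_lt_of_le (by norm_num) (le_max_left _ _)
    have hid : ∀ u : ℝ, u ∈ Ioo u₀ 1 → K₀ (1 - c*(1-u)) - K₀ u
        = K₀ ((1 + u*c - c)/(1+u*c)) - K₀ (c*u/(1+u*c)) := by
      intro u hu
      have hu0 : 0 < u := lt_trans hu₀pos hu.1
      have hu1 : u < 1 := hu.2
      have h1uc : (0:ℝ) < 1 + u*c := by positivity
      have h1ucne : (1+u*c:ℝ) ≠ 0 := ne_of_gt h1uc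
      have hnum : 0 < 1 + u*c - c := by
        have h2 : 1 - 1/c < u := lt_of_le_of_lt (le_max_right _ _) hu.1
        have := mul_lt_mul_of_pos_right h2 hc
        rw [sub_mul, one_mul, div_mul_cancel₀ _ hcne] at this
        nlinarith
      have hx : (1 + u*c - c)/(1+u*c) ∈ Ioo (0:ℝ) 1 := by
        constructor
        · positivity
        · rw [div_lt_one h1uc]; linarith
      have hy : c*u/(1+u*c) ∈ Ioo (0:ℝ) 1 := by
        constructor
        · positivity
        · rw [div_lt_one h1uc]; nlinarith
      have hsum : (1 + u*c - c)/(1+u*c) + c*u/(1+u*c) < 1 := by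
        rw [← add_div, div_lt_one h1uc]
        nlinarith
      have h := hI' _ _ hx hy hsum
      have ey : 1 - c*u/(1+u*c) = 1/(1+u*c) := by field_simp; ring
      have ex : 1 - (1 + u*c - c)/(1+u*c) = c/(1+u*c) := by field_simp; ring
      have e1 : ((1 + u*c - c)/(1+u*c)) / (1 - c*u/(1+u*c)) = 1 - c*(1-u) := by
        rw [ey, div_div_div_cancel_right₀ h1ucne, div_one]; ring
      have e2 : (c*u/(1+u*c)) / (1 - (1 + u*c - c)/(1+u*c)) = u := by
        rw [ex, div_div_div_cancel_right₀ h1ucne, mul_comm, mul_div_assoc,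
          div_self hcne, mul_one]
      rw [e1, e2] at h
      linarith [h]
    have hxmem : 1/(1+c) ∈ Ioo (0:ℝ) 1 :=
      ⟨by positivity, by rw [div_lt_one h1c]; linarith⟩
    have hymem : c/(1+c) ∈ Ioo (0:ℝ) 1 :=
      ⟨by positivity, by rw [div_lt_one h1c]; linarith⟩
    have hxlim : Tendsto (fun u : ℝ => (1 + u*c - c)/(1+u*c)) (𝓝[<] (1:ℝ)) (𝓝 (1/(1+c))) := by
      have h0 : Tendsto (fun u : ℝ => (1 + u*c - c)/(1+u*c)) (𝓝 1) (𝓝 ((1 + 1*c - c)/(1+1*c))) := by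
        apply Tendsto.div
        · exact ((continuous_const.add (continuous_id.mul continuous_const)).sub continuous_const).tendsto 1
        · exact (continuous_const.add (continuous_id.mul continuous_const)).tendsto 1
        · rw [one_mul]; exact h1cne
      have harg : (1 + 1*c - c)/(1+1*c) = 1/(1+c) := by
        rw [one_mul, add_sub_cancel_right]
      rw [harg] at h0
      exact h0.mono_left nhdsWithin_le_nhds
    have hylim : Tendsto (fun u : ℝ => c*u/(1+u*c)) (𝓝[<] (1:ℝ)) (𝓝 (c/(1+c))) := by
      have h0 : Tendsto (fun u : ℝ => c*u/(1+u*c)) (𝓝 1) (𝓝 (c*1/(1+1*c))) := by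
        apply Tendsto.div
        · exact (continuous_const.mul continuous_id).tendsto 1
        · exact (continuous_const.add (continuous_id.mul continuous_const)).tendsto 1
        · rw [one_mul]; exact h1cne
      have harg : c*1/(1+1*c) = c/(1+c) := by rw [one_mul, mul_one]
      rw [harg] at h0
      exact h0.mono_left nhdsWithin_le_nhds
    have hRHS : Tendsto (fun u : ℝ => K₀ ((1 + u*c - c)/(1+u*c)) - K₀ (c*u/(1+u*c)))
        (𝓝[<] (1:ℝ)) (𝓝 (Λf c)) := by
      rw [hΛfdef]
      exact ((hK₀at _ hxmem).tendsto.comp hxlim).sub ((hK₀at _ hymem).tendsto.comp hylim)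
    apply hRHS.congr'
    filter_upwards [Ioo_mem_nhdsLT_of_mem (⟨hu₀1, le_refl (1:ℝ)⟩ : (1:ℝ) ∈ Ioc u₀ 1)] with u hu
    exact (hid u hu).symm
  have hΛadd : ∀ c d : ℝ, 0 < c → 0 < d → Λf (c*d) = Λf c + Λf d := by
    intro c d hc' hd
    have t1 := (hΛlim c hc').comp (hshrink d hd)
    have t2 := hΛlim d hd
    have heqf : ∀ u : ℝ, ((fun u => K₀ (1 - c*(1-u)) - K₀ u) ∘ (fun u => 1 - d*(1-u))) u
        + (K₀ (1 - d*(1-u)) - K₀ u) = K₀ (1 - c*d*(1-u)) - K₀ u := by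
      intro u
      simp only [Function.comp_apply]
      have harg : 1 - c*(1-(1 - d*(1-u))) = 1 - c*d*(1-u) := by ring
      rw [harg]
      ring
    exact tendsto_nhds_unique (hΛlim (c*d) (mul_pos hc' hd)) ((t1.add t2).congr heqf)
  have hΛcont : ∀ c : ℝ, 0 < c → ContinuousAt Λf c := by
    intro c hc'
    have h1c : (1:ℝ) + c ≠ 0 := ne_of_gt (by linarith : (0:ℝ) < 1 + c)
    have hu : ContinuousAt (fun c : ℝ => 1/(1+c)) c :=
      ContinuousAt.div continuousAt_const (by fun_prop) h1c
    have hv : ContinuousAt (fun c : ℝ => c/(1+c)) c :=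
      ContinuousAt.div continuousAt_id (by fun_prop) h1c
    have humem : 1/(1+c) ∈ Ioo (0:ℝ) 1 :=
      ⟨by positivity, by rw [div_lt_one (by linarith)]; linarith⟩
    have hvmem : c/(1+c) ∈ Ioo (0:ℝ) 1 :=
      ⟨by positivity, by rw [div_lt_one (by linarith)]; linarith⟩
    rw [hΛfdef]
    have c1 := ContinuousAt.comp (g := K₀) (f := fun c : ℝ => 1/(1+c)) (x := c)
      (hK₀at _ humem) hu
    have c2 := ContinuousAt.comp (g := K₀) (f := fun c : ℝ => c/(1+c)) (x := c)
      (hK₀at _ hvmem) hv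
    exact c1.sub c2
  have hΛform := mul_cont_log Λf hΛcont hΛadd
  set κ₁ : ℝ := Λf (exp 1) with hκ₁def
  set Δ : ℝ → ℝ := fun v => K₀ v - κ₁ * log (1-v) with hΔdef
  have hΔsym : ∀ v : ℝ, v ∈ Ioo (0:ℝ) 1 → Δ v = Δ (1-v) := by
    intro v hv
    have hv1 : (0:ℝ) < 1 - v := by linarith [hv.2]
    have hvne : v ≠ 0 := ne_of_gt hv.1
    set c : ℝ := (1-v)/v with hcdef
    have hc' : 0 < c := by rw [hcdef]; exact div_pos hv1 hv.1
    have e0 : 1 + c = 1/v := by rw [hcdef]; field_simp; ring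
    have e1 : 1/(1+c) = v := by rw [e0, one_div_one_div]
    have e2 : c/(1+c) = 1 - v := by
      rw [e0, hcdef, div_div_div_cancel_right₀ hvne, div_one]
    have h := hΛform c hc'
    rw [hΛfdef] at h
    simp only [] at h
    rw [e1, e2] at h
    have h3 : log c = log (1-v) - log v := by
      rw [hcdef, log_div (ne_of_gt hv1) hvne]
    rw [h3] at h
    rw [hΔdef]
    simp only []
    have h4 : 1 - (1-v) = v := by ring
    rw [h4]
    linear_combination h
  have hJ : ∀ x y : ℝ, x ∈ Ioo (0:ℝ) 1 → y ∈ Ioo (0:ℝ) 1 → x + y < 1 →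
      Δ x + Δ (y/(1-x)) = Δ y + Δ (x/(1-y)) := by
    intro x y hx hy hxy
    have hx1 : (0:ℝ) < 1 - x := by linarith [hx.2]
    have hy1 : (0:ℝ) < 1 - y := by linarith [hy.2]
    have hz : (0:ℝ) < 1 - x - y := by linarith
    have h := hI' x y hx hy hxy
    rw [hΔdef]
    simp only []
    have l1 : log (1 - y/(1-x)) = log (1-x-y) - log (1-x) := by
      have harg : 1 - y/(1-x) = (1-x-y)/(1-x) := by field_simp; try ring
      rw [harg, log_div (ne_of_gt hz) (ne_of_gt hx1)]
    have l2 : log (1 - x/(1-y)) = log (1-x-y) - log (1-y) := by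
      have harg : 1 - x/(1-y) = (1-x-y)/(1-y) := by field_simp; try ring
      rw [harg, log_div (ne_of_gt hz) (ne_of_gt hy1)]
    rw [l1, l2]
    linear_combination h
  have hΔsq : ∀ r : ℝ, r ∈ Ioo (0:ℝ) 1 → Δ r = Δ (r^2) := by
    intro r hr
    have hr0 : (0:ℝ) < r := hr.1
    have hr1 : (0:ℝ) < 1 + r := by linarith [hr.1]
    have hr1ne : (1+r:ℝ) ≠ 0 := ne_of_gt hr1
    have hrne : r ≠ 0 := ne_of_gt hr.1
    have hm1 : (1 - r) ∈ Ioo (0:ℝ) 1 := ⟨by linarith [hr.2], by linarith [hr.1]⟩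
    have hm2 : r/(1+r) ∈ Ioo (0:ℝ) 1 :=
      ⟨by positivity, by rw [div_lt_one hr1]; linarith⟩
    have hsum : (1-r) + r/(1+r) < 1 := by
      have h' : r/(1+r) < r := by
        rw [div_lt_iff₀ hr1]; nlinarith [hr.1, hr.2]
      linarith
    have h1 := hJ (1-r) (r/(1+r)) hm1 hm2 hsum
    have e1 : (r/(1+r))/(1-(1-r)) = 1/(1+r) := by
      rw [sub_sub_cancel, div_div, mul_comm, ← div_div, div_self hrne]
    have e2 : (1-r)/(1 - r/(1+r)) = 1 - r^2 := by
      have harg : 1 - r/(1+r) = 1/(1+r) := by field_simp; ring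
      rw [harg, div_div_eq_mul_div, div_one]
      ring
    rw [e1, e2] at h1
    have s1 := hΔsym r hr
    have hinv : 1/(1+r) ∈ Ioo (0:ℝ) 1 :=
      ⟨by positivity, by rw [div_lt_one hr1]; linarith [hr.1]⟩
    have s2 := hΔsym (1/(1+r)) hinv
    have e3 : 1 - 1/(1+r) = r/(1+r) := by field_simp; ring
    rw [e3] at s2
    have hr2 : r^2 ∈ Ioo (0:ℝ) 1 := ⟨by positivity, by nlinarith [hr.1, hr.2]⟩
    have s3 := hΔsym (r^2) hr2
    linear_combination s1 + h1 - s2 - s3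
  have hΔcont : ContinuousOn Δ (Ioo 0 1) := by
    intro v hv
    have hca : ContinuousAt Δ v := by
      rw [hΔdef]
      apply ContinuousAt.sub (hK₀at v hv)
      apply ContinuousAt.mul continuousAt_const
      have h1 : ContinuousAt (fun x : ℝ => 1 - x) v := by fun_prop
      exact (Real.continuousAt_log (by linarith [hv.2] : (1:ℝ) - v ≠ 0)).comp h1
    exact hca.continuousWithinAt
  have hconst := const_of_sq_sym Δ hΔcont hΔsym hΔsq
  refine ⟨κ₁, K₀ (1/2) - κ₁ * log (1 - 1/2), ?_⟩
  intro v hv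
  have h := hconst v hv (1/2) (by norm_num)
  rw [hΔdef] at h
  simp only [] at h
  linarith [h]

set_option maxHeartbeats 1000000 in
theorem stmt_2 (F G H K : ℝ → ℝ)
    (hF : ContinuousOn F (Set.Ioo 0 1)) (hG : ContinuousOn G (Set.Ioo 0 1))
    (hH : ContinuousOn H (Set.Ioo 0 1)) (hK : ContinuousOn K (Set.Ioo 0 1))
    (heq : ∀ x y : ℝ, x ∈ Set.Ioo (0:ℝ) 1 → y ∈ Set.Ioo (0:ℝ) 1 → x + y ∈ Set.Ioo (0:ℝ) 1 →
      F x + G (y / (1 - x)) = H y + K (x / (1 - y))) :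
    ∃ κ₁ κ₂ κ₃ C₁ C₂ C₃ C₄ : ℝ, C₁ + C₂ = C₃ + C₄ ∧
      ∀ x ∈ Set.Ioo (0:ℝ) 1,
        F x = (κ₁ + κ₃) * Real.log (1 - x) + κ₂ * Real.log x + C₁ ∧
        G x = κ₁ * Real.log (1 - x) + κ₃ * Real.log x + C₂ ∧
        H x = (κ₁ + κ₂) * Real.log (1 - x) + κ₃ * Real.log x + C₃ ∧
        K x = κ₁ * Real.log (1 - x) + κ₂ * Real.log x + C₄ := by
  have hmem : ∀ s : ℝ, 0 < s → s / (1 + s) ∈ Ioo (0:ℝ) 1 := by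
    intro s hs
    constructor
    · positivity
    · rw [div_lt_one (by linarith)]; linarith
  set P : ℝ → ℝ := fun s => F (s / (1 + s)) - H (s / (1 + s)) with hPdef
  set Q : ℝ → ℝ := fun s => K (s / (1 + s)) - G (s / (1 + s)) with hQdef
  have hPcont : ContinuousOn P (Ioi 0) := by
    have hin : ∀ s : ℝ, s ∈ Ioi (0:ℝ) → s / (1 + s) ∈ Ioo (0:ℝ) 1 := fun s hs => hmem s hs
    have hcd : ContinuousOn (fun s : ℝ => s / (1 + s)) (Ioi 0) := by
      apply ContinuousOn.div continuousOn_id (continuousOn_const.add continuousOn_id)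
      intro s hs
      have : (0:ℝ) < s := hs
      intro h; simp at h; linarith [h]
    exact ((hF.comp hcd hin).sub (hH.comp hcd hin))
  -- star equation
  have key : ∀ s t : ℝ, 0 < s → 0 < t →
      F (s / (1 + s + t)) + G (t / (1 + t)) = H (t / (1 + s + t)) + K (s / (1 + s)) := by
    intro s t hs ht
    have hd : (0:ℝ) < 1 + s + t := by linarith
    have hdne : (1 + s + t : ℝ) ≠ 0 := ne_of_gt hd
    have h1 : s / (1 + s + t) ∈ Ioo (0:ℝ) 1 :=
      ⟨by positivity, by rw [div_lt_one hd]; linarith⟩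
    have h2 : t / (1 + s + t) ∈ Ioo (0:ℝ) 1 :=
      ⟨by positivity, by rw [div_lt_one hd]; linarith⟩
    have h3 : s / (1 + s + t) + t / (1 + s + t) ∈ Ioo (0:ℝ) 1 := by
      rw [← add_div]
      exact ⟨by positivity, by rw [div_lt_one hd]; linarith⟩
    have e1 : (t / (1 + s + t)) / (1 - s / (1 + s + t)) = t / (1 + t) := by
      have h' : 1 - s / (1 + s + t) = (1 + t) / (1 + s + t) := by field_simp; try ring
      rw [h', div_div_div_cancel_right₀ hdne]
    have e2 : (s / (1 + s + t)) / (1 - t / (1 + s + t)) = s / (1 + s) := by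
      have h' : 1 - t / (1 + s + t) = (1 + s) / (1 + s + t) := by field_simp; try ring
      rw [h', div_div_div_cancel_right₀ hdne]
    have := heq _ _ h1 h2 h3
    rwa [e1, e2] at this
  -- A'
  have hA' : ∀ s t : ℝ, 0 < s → 0 < t →
      P (s / (1 + t)) + P (t / (1 + s)) = Q s + Q t := by
    intro s t hs ht
    have k1 := key s t hs ht
    have k2 := key t s ht hs
    have hco : (1 + t + s : ℝ) = 1 + s + t := by ring
    rw [hco] at k2
    have h1t : (1 + t : ℝ) ≠ 0 := by positivity
    have h1s : (1 + s : ℝ) ≠ 0 := by positivity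
    have ha : (s / (1 + t)) / (1 + s / (1 + t)) = s / (1 + s + t) := by
      have h' : 1 + s / (1 + t) = (1 + s + t) / (1 + t) := by field_simp; try ring
      rw [h', div_div_div_cancel_right₀ h1t]
    have hb : (t / (1 + s)) / (1 + t / (1 + s)) = t / (1 + s + t) := by
      have h' : 1 + t / (1 + s) = (1 + s + t) / (1 + s) := by field_simp; try ring
      rw [h', div_div_div_cancel_right₀ h1s]
    simp only [hPdef, hQdef]
    rw [ha, hb]
    linarith [k1, k2]
  have hQP : ∀ s : ℝ, 0 < s → Q s = P (s / (1 + s)) := by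
    intro s hs
    have := hA' s s hs hs
    linarith
  have hA'' : ∀ a b : ℝ, 0 < a → 0 < b → a * b < 1 →
      P a + P b = P (a * (1 + b) / (1 + a)) + P (b * (1 + a) / (1 + b)) := by
    intro a b ha hb hab
    have hab' : (0:ℝ) < 1 - a * b := by linarith
    have habne : (1 - a * b : ℝ) ≠ 0 := ne_of_gt hab'
    have h1a : (1 + a : ℝ) ≠ 0 := by positivity
    have h1b : (1 + b : ℝ) ≠ 0 := by positivity
    set s : ℝ := a * (1 + b) / (1 - a * b) with hsdef
    set t : ℝ := b * (1 + a) / (1 - a * b) with htdef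
    have hs : 0 < s := by rw [hsdef]; positivity
    have ht : 0 < t := by rw [htdef]; positivity
    have h1 : s / (1 + t) = a := by
      rw [hsdef, htdef]
      have h' : 1 + b * (1 + a) / (1 - a * b) = (1 + b) / (1 - a * b) := by
        rw [eq_div_iff habne, add_mul, div_mul_cancel₀ _ habne]; ring
      rw [h', div_div_div_cancel_right₀ habne, mul_div_cancel_right₀ _ h1b]
    have h2 : t / (1 + s) = b := by
      rw [hsdef, htdef]
      have h' : 1 + a * (1 + b) / (1 - a * b) = (1 + a) / (1 - a * b) := by
        field_simp; try ring
      rw [h', div_div_div_cancel_right₀ habne, mul_div_cancel_right₀ _ h1a]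
    have h3 : s / (1 + s) = a * (1 + b) / (1 + a) := by
      rw [hsdef]
      have h' : 1 + a * (1 + b) / (1 - a * b) = (1 + a) / (1 - a * b) := by
        field_simp; try ring
      rw [h', div_div_div_cancel_right₀ habne]
    have h4 : t / (1 + t) = b * (1 + a) / (1 + b) := by
      rw [htdef]
      have h' : 1 + b * (1 + a) / (1 - a * b) = (1 + b) / (1 - a * b) := by
        rw [eq_div_iff habne, add_mul, div_mul_cancel₀ _ habne]; ring
      rw [h', div_div_div_cancel_right₀ habne]
    have h5 := hA' s t hs ht
    rw [h1, h2, hQP s hs, hQP t ht, h3, h4] at h5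
    exact h5
  -- P is logarithmic
  have hPform := jensen_log P hPcont hA''
  set m : ℝ := P (exp 1) - P 1 with hmdef
  set c₀ : ℝ := P 1 with hc₀def
  -- pointwise formulas for F - H and K - G
  have hfrac : ∀ u : ℝ, u ∈ Ioo (0:ℝ) 1 → (u / (1 - u)) / (1 + u / (1 - u)) = u := by
    intro u hu
    have h1u : (1 - u : ℝ) ≠ 0 := by
      have := hu.2; intro h'; apply absurd this; simp; linarith [sub_eq_zero.mp h']
    have h' : 1 + u / (1 - u) = 1 / (1 - u) := by field_simp; ring
    rw [h', div_div_div_cancel_right₀ h1u, div_one]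
  have hp : ∀ u : ℝ, u ∈ Ioo (0:ℝ) 1 → F u - H u = m * log u - m * log (1 - u) + c₀ := by
    intro u hu
    have hupos : 0 < u / (1 - u) := div_pos hu.1 (by linarith [hu.2])
    have h1 := hPform _ hupos
    rw [hPdef] at h1
    simp only [] at h1
    rw [hfrac u hu] at h1
    rw [h1, log_div (ne_of_gt hu.1) (by linarith [hu.2] : (1 - u : ℝ) ≠ 0)]
    ring
  have hq : ∀ u : ℝ, u ∈ Ioo (0:ℝ) 1 → K u - G u = m * log u + c₀ := by
    intro u hu
    have h1u : (0:ℝ) < 1 - u := by linarith [hu.2]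
    have hupos : 0 < u / (1 - u) := div_pos hu.1 h1u
    have h2 : K u - G u = P u := by
      have h := hQP (u / (1 - u)) hupos
      rw [hQdef, hPdef] at h
      simp only [] at h
      rw [hfrac u hu] at h
      exact h
    rw [h2, hPform u hu.1]
  -- the two-function equation C2
  set F₁ : ℝ → ℝ := fun x => F x + m * log (1 - x) with hF₁def
  have hC2 : ∀ x y : ℝ, x ∈ Ioo (0:ℝ) 1 → y ∈ Ioo (0:ℝ) 1 → x + y < 1 →
      F₁ x - F₁ y = K (x / (1 - y)) - K (y / (1 - x)) := by
    intro x y hx hy hxy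
    have hx1 : (0:ℝ) < 1 - x := by linarith [hx.2]
    have hy1 : (0:ℝ) < 1 - y := by linarith [hy.2]
    have hyx : y / (1 - x) ∈ Ioo (0:ℝ) 1 :=
      ⟨div_pos hy.1 hx1, (div_lt_one hx1).mpr (by linarith)⟩
    have hxy' : x / (1 - y) ∈ Ioo (0:ℝ) 1 :=
      ⟨div_pos hx.1 hy1, (div_lt_one hy1).mpr (by linarith)⟩
    have hsum : x + y ∈ Ioo (0:ℝ) 1 := ⟨by linarith [hx.1, hy.1], hxy⟩
    have h0 := heq x y hx hy hsum
    have h1 := hp y hy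
    have h2 := hq (y / (1 - x)) hyx
    have hlog : log (y / (1 - x)) = log y - log (1 - x) :=
      log_div (ne_of_gt hy.1) (ne_of_gt hx1)
    rw [hF₁def]
    simp only []
    rw [hlog, mul_sub] at h2
    linear_combination h0 - h1 + h2
  -- continuity of F₁
  have hlogc : ContinuousOn (fun x : ℝ => log (1 - x)) (Ioo 0 1) := by
    intro v hv
    have hca : ContinuousAt (fun x : ℝ => log (1 - x)) v := by
      have h1 : ContinuousAt (fun x : ℝ => 1 - x) v := by fun_prop
      exact (Real.continuousAt_log (by linarith [hv.2] : (1:ℝ) - v ≠ 0)).comp h1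
    exact hca.continuousWithinAt
  have hF₁c : ContinuousOn F₁ (Ioo 0 1) := by
    rw [hF₁def]
    exact hF.add (continuousOn_const.mul hlogc)
  obtain ⟨κ₂, c₁, hF1K⟩ := step_L K F₁ hK hF₁c hC2
  -- one-function equation
  set K₀ : ℝ → ℝ := fun u => K u - κ₂ * log u with hK₀def
  have hI' : ∀ x y : ℝ, x ∈ Ioo (0:ℝ) 1 → y ∈ Ioo (0:ℝ) 1 → x + y < 1 →
      K₀ x - K₀ y = K₀ (x/(1-y)) - K₀ (y/(1-x)) := by
    intro x y hx hy hxy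
    have hx1 : (0:ℝ) < 1 - x := by linarith [hx.2]
    have hy1 : (0:ℝ) < 1 - y := by linarith [hy.2]
    have hI := hC2 x y hx hy hxy
    rw [hF1K x hx, hF1K y hy] at hI
    rw [hK₀def]
    simp only []
    have l1 : log (x/(1-y)) = log x - log (1-y) := log_div (ne_of_gt hx.1) (ne_of_gt hy1)
    have l2 : log (y/(1-x)) = log y - log (1-x) := log_div (ne_of_gt hy.1) (ne_of_gt hx1)
    rw [l1, l2]
    linear_combination hI
  have hK₀c : ContinuousOn K₀ (Ioo 0 1) := by
    rw [hK₀def]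
    apply hK.sub (continuousOn_const.mul ?_)
    intro v hv
    exact (Real.continuousAt_log (ne_of_gt hv.1)).continuousWithinAt
  obtain ⟨κ₁, c₄, hK₀form⟩ := step_Lam K₀ hK₀c hI'
  -- assembly
  refine ⟨κ₁, κ₂, κ₂ - m, c₄ - c₁, c₄ - c₀, c₄ - c₁ - c₀, c₄, by ring, ?_⟩
  intro x hx
  have hx1 : (0:ℝ) < 1 - x := by linarith [hx.2]
  have hKform := hK₀form x hx
  rw [hK₀def] at hKform
  simp only [] at hKform
  -- hKform : K x - κ₂ * log x = κ₁ * log (1-x) + c₄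
  have hKval : K x = κ₁ * log (1-x) + κ₂ * log x + c₄ := by linarith [hKform]
  have hF₁val := hF1K x hx
  have hF₁x : F₁ x = F x + m * log (1-x) := by rw [hF₁def]
  have hFval : F x = (κ₁ + (κ₂ - m)) * log (1-x) + κ₂ * log x + (c₄ - c₁) := by
    linear_combination hKval + hF₁val - hF₁x
  have hpx := hp x hx
  have hHval : H x = (κ₁ + κ₂) * log (1-x) + (κ₂ - m) * log x + (c₄ - c₁ - c₀) := by
    linear_combination hFval - hpx
  have hqx := hq x hx
  have hGval : G x = κ₁ * log (1-x) + (κ₂ - m) * log x + (c₄ - c₀) := by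
    linear_combination hKval - hqx
  exact ⟨hFval, hGval, hHval, hKval⟩
end

section
/- Define ψ : D₀' → (0,1)² by ψ(x,y) = (1 - x·y, (1-x)/(1-x·y)), where D₀' = (0,1)². Then ψ is a bijection from (0,1)² onto (0,1)², with inverse ψ⁻¹(u,v) = (1 - u·v, (1-u)/(1-u·v)), and the absolute value of the Jacobian determinant of ψ⁻¹ at (u,v) equals u/(1 - u·v). -/
open Set

lemma clm_det_aux (L : ℝ × ℝ →L[ℝ] ℝ × ℝ) :
    L.det = (L (1,0)).1 * (L (0,1)).2 - (L (0,1)).1 * (L (1,0)).2 := by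
  have h := LinearMap.det_toMatrix (Module.Basis.finTwoProd ℝ) (L : ℝ×ℝ →ₗ[ℝ] ℝ×ℝ)
  rw [ContinuousLinearMap.det, ← h, Matrix.det_fin_two]
  simp [LinearMap.toMatrix_apply, Module.Basis.finTwoProd]

lemma involution_aux (x y : ℝ) (hx : x ∈ Set.Ioo (0:ℝ) 1) (hy : y ∈ Set.Ioo (0:ℝ) 1) :
    (fun p : ℝ × ℝ => (1 - p.1 * p.2, (1 - p.1) / (1 - p.1 * p.2)))
      ((fun p : ℝ × ℝ => (1 - p.1 * p.2, (1 - p.1) / (1 - p.1 * p.2))) (x, y)) = (x, y) := by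
  have hw : 1 - x * y ≠ 0 := by nlinarith [hx.1, hx.2, hy.1, hy.2]
  have hx0 : x ≠ 0 := ne_of_gt hx.1
  have e1 : 1 - (1 - x*y) * ((1 - x)/(1 - x*y)) = x := by field_simp; ring
  simp only [Prod.mk.injEq]
  refine ⟨e1, ?_⟩
  rw [e1]
  field_simp
  ring

lemma mapsTo_aux :
    Set.MapsTo (fun p : ℝ × ℝ => (1 - p.1 * p.2, (1 - p.1) / (1 - p.1 * p.2)))
      (Set.Ioo (0:ℝ) 1 ×ˢ Set.Ioo (0:ℝ) 1) (Set.Ioo (0:ℝ) 1 ×ˢ Set.Ioo (0:ℝ) 1) := by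
  rintro ⟨x, y⟩ ⟨hx, hy⟩
  simp only [Set.mem_Ioo] at hx hy
  obtain ⟨hx0, hx1⟩ := hx
  obtain ⟨hy0, hy1⟩ := hy
  have hxy : x * y < 1 := by nlinarith
  have hw : 0 < 1 - x * y := by linarith
  refine ⟨⟨by nlinarith, by nlinarith⟩, ?_, ?_⟩
  · exact div_pos (by linarith) hw
  · rw [div_lt_one hw]; nlinarith

theorem stmt_7 (ψ φ : ℝ × ℝ → ℝ × ℝ)
    (hψ : ψ = fun p => (1 - p.1 * p.2, (1 - p.1) / (1 - p.1 * p.2)))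
    (hφ : φ = fun p => (1 - p.1 * p.2, (1 - p.1) / (1 - p.1 * p.2))) :
    Set.BijOn ψ (Set.Ioo (0:ℝ) 1 ×ˢ Set.Ioo (0:ℝ) 1) (Set.Ioo (0:ℝ) 1 ×ˢ Set.Ioo (0:ℝ) 1) ∧
    Set.InvOn φ ψ (Set.Ioo (0:ℝ) 1 ×ˢ Set.Ioo (0:ℝ) 1) (Set.Ioo (0:ℝ) 1 ×ˢ Set.Ioo (0:ℝ) 1) ∧
    ∀ u v : ℝ, u ∈ Set.Ioo (0:ℝ) 1 → v ∈ Set.Ioo (0:ℝ) 1 →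
      |(fderiv ℝ φ (u, v)).det| = u / (1 - u * v) := by
  subst hψ hφ
  have hinv : ∀ p ∈ (Set.Ioo (0:ℝ) 1 ×ˢ Set.Ioo (0:ℝ) 1),
      (fun p : ℝ × ℝ => (1 - p.1 * p.2, (1 - p.1) / (1 - p.1 * p.2)))
        ((fun p : ℝ × ℝ => (1 - p.1 * p.2, (1 - p.1) / (1 - p.1 * p.2))) p) = p := by
    rintro ⟨x, y⟩ ⟨hx, hy⟩
    exact involution_aux x y hx hy
  have hInvOn : Set.InvOn (fun p : ℝ × ℝ => (1 - p.1 * p.2, (1 - p.1) / (1 - p.1 * p.2)))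
      (fun p : ℝ × ℝ => (1 - p.1 * p.2, (1 - p.1) / (1 - p.1 * p.2)))
      (Set.Ioo (0:ℝ) 1 ×ˢ Set.Ioo (0:ℝ) 1) (Set.Ioo (0:ℝ) 1 ×ˢ Set.Ioo (0:ℝ) 1) :=
    ⟨fun p hp => hinv p hp, fun p hp => hinv p hp⟩
  refine ⟨hInvOn.bijOn mapsTo_aux mapsTo_aux, hInvOn, ?_⟩
  intro u v hu hv
  have hw : 1 - u * v ≠ 0 := by nlinarith [hu.1, hu.2, hv.1, hv.2]
  have hwpos : 0 < 1 - u * v := by nlinarith [hu.1, hu.2, hv.1, hv.2]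
  have key : ∃ L : ℝ × ℝ →L[ℝ] ℝ × ℝ,
      HasFDerivAt (fun p : ℝ × ℝ => (1 - p.1 * p.2, (1 - p.1) / (1 - p.1 * p.2))) L (u, v)
      ∧ (L (1,0)).1 * (L (0,1)).2 - (L (0,1)).1 * (L (1,0)).2 = -(u/(1-u*v)) := by
    have hg : HasFDerivAt (fun p : ℝ × ℝ => 1 - p.1 * p.2)
        (0 - (((u,v):ℝ×ℝ).1 • ContinuousLinearMap.snd ℝ ℝ ℝ
          + ((u,v):ℝ×ℝ).2 • ContinuousLinearMap.fst ℝ ℝ ℝ)) (u, v) :=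
      (hasFDerivAt_const (1:ℝ) _).sub (hasFDerivAt_fst.mul hasFDerivAt_snd)
    have hf : HasFDerivAt (fun p : ℝ × ℝ => 1 - p.1)
        (0 - ContinuousLinearMap.fst ℝ ℝ ℝ) (u, v) :=
      (hasFDerivAt_const (1:ℝ) _).sub hasFDerivAt_fst
    have hinv' : HasFDerivAt (fun p : ℝ × ℝ => (1 - p.1 * p.2)⁻¹) _ (u, v) :=
      (hasFDerivAt_inv hw).comp ((u,v):ℝ×ℝ) hg
    have h2 := hf.mul hinv'
    simp only [div_eq_mul_inv]
    refine ⟨_, hg.prodMk h2, ?_⟩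
    simp
    field_simp
    ring_nf
    rw [show (1 - u*v*2 + u^2*v^2) = (1-u*v)^2 by ring]
    field_simp
    ring
  obtain ⟨L, hL, hval⟩ := key
  rw [hL.fderiv, clm_det_aux, hval, abs_neg, abs_of_pos (div_pos hu.1 hwpos)]
end

section
/- For r×r real symmetric positive definite matrices, let Δ_k(x) denote the leading principal k×k minor of x. For every lower triangular invertible matrix t and every symmetric positive definite x, Δ_k(t · x · tᵀ) = Δ_k(t · tᵀ) · Δ_k(x) for each 1 ≤ k ≤ r. -/
open Matrix

/-- The leading principal `k × k` minor of an `r × r` matrix (meaningful for `k ≤ r`). -/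
noncomputable def pminor (r k : ℕ) (x : Matrix (Fin r) (Fin r) ℝ) : ℝ :=
  (Matrix.of fun i j : Fin k =>
    if h : (i : ℕ) < r ∧ (j : ℕ) < r then x ⟨i, h.1⟩ ⟨j, h.2⟩ else 0).det

lemma sum_trunc {r k : ℕ} (hkr : k ≤ r) (g : Fin r → ℝ)
    (h : ∀ a : Fin r, (k : ℕ) ≤ (a : ℕ) → g a = 0) :
    ∑ a : Fin r, g a = ∑ a : Fin k, g (Fin.castLE hkr a) := by
  have : ∑ a : Fin k, g (Fin.castLE hkr a) = ∑ a ∈ Finset.univ.map (Fin.castLEEmb hkr), g a := by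
    rw [Finset.sum_map]
    rfl
  rw [this]
  refine (Finset.sum_subset (Finset.subset_univ _) ?_).symm
  intro a _ ha
  refine h a (le_of_not_gt fun hlt => ha ?_)
  simp only [Finset.mem_map, Finset.mem_univ, true_and]
  exact ⟨⟨(a : ℕ), hlt⟩, by ext; simp [Fin.castLEEmb]⟩

lemma pminor_eq_det {r k : ℕ} (hkr : k ≤ r) (x : Matrix (Fin r) (Fin r) ℝ) :
    pminor r k x = (x.submatrix (Fin.castLE hkr) (Fin.castLE hkr)).det := by
  unfold pminor
  congr 1
  ext i j
  have hi : (i : ℕ) < r := lt_of_lt_of_le i.2 hkr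
  have hj : (j : ℕ) < r := lt_of_lt_of_le j.2 hkr
  have h : (Matrix.of fun i j : Fin k =>
      if h : (i : ℕ) < r ∧ (j : ℕ) < r then x ⟨i, h.1⟩ ⟨j, h.2⟩ else 0) i j
      = x ⟨i, hi⟩ ⟨j, hj⟩ := dif_pos ⟨hi, hj⟩
  rw [h]
  rfl

lemma submatrix_conj {r k : ℕ} (hkr : k ≤ r)
    (t x : Matrix (Fin r) (Fin r) ℝ)
    (ht : ∀ i j : Fin r, i < j → t i j = 0) :
    (t * x * tᵀ).submatrix (Fin.castLE hkr) (Fin.castLE hkr) =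
      t.submatrix (Fin.castLE hkr) (Fin.castLE hkr) *
        x.submatrix (Fin.castLE hkr) (Fin.castLE hkr) *
        (t.submatrix (Fin.castLE hkr) (Fin.castLE hkr))ᵀ := by
  ext i j
  simp only [Matrix.submatrix_apply, Matrix.mul_apply, Matrix.transpose_apply]
  rw [sum_trunc hkr]
  · refine Finset.sum_congr rfl fun b _ => ?_
    congr 1
    rw [sum_trunc hkr]
    intro a hka
    rw [ht (Fin.castLE hkr i) a (by
      simp only [Fin.lt_iff_val_lt_val, Fin.coe_castLE]
      exact lt_of_lt_of_le i.2 hka), zero_mul]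
  · intro b hkb
    rw [ht (Fin.castLE hkr j) b (by
      simp only [Fin.lt_iff_val_lt_val, Fin.coe_castLE]
      exact lt_of_lt_of_le j.2 hkb), mul_zero]

theorem stmt_11 (r k : ℕ) (hk1 : 1 ≤ k) (hkr : k ≤ r)
    (t x : Matrix (Fin r) (Fin r) ℝ)
    (ht : ∀ i j : Fin r, i < j → t i j = 0) (htu : IsUnit t.det)
    (hx : x.PosDef) :
    pminor r k (t * x * tᵀ) = pminor r k (t * tᵀ) * pminor r k x := by
  have h1 := submatrix_conj hkr t x ht
  have h2 := submatrix_conj hkr t 1 ht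
  rw [mul_one] at h2
  rw [pminor_eq_det hkr, pminor_eq_det hkr, pminor_eq_det hkr, h1, h2,
    Matrix.submatrix_one _ (Fin.castLE_injective hkr), mul_one]
  rw [Matrix.det_mul, Matrix.det_mul, Matrix.det_mul, Matrix.det_transpose]
  ring
end

section
/- For any r×r real symmetric positive definite matrices x and y with x·y·x symmetric positive definite, det(x·y·x) = (det x)² · det y; consequently, for the quadratic representation P(y)x = y·x·y on symmetric matrices, Det(P(y)) (the determinant of P(y) as a linear endomorphism of the space of r×r symmetric matrices) equals (det y)^{r+1}. -/
open Matrix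

/-- The quadratic representation `P(y) : x ↦ y * x * y` as a linear endomorphism of the space of
real symmetric (self-adjoint) `r × r` matrices. -/
noncomputable def quadRep (r : ℕ) (y : Matrix (Fin r) (Fin r) ℝ) (hy : star y = y) :
    Module.End ℝ (selfAdjoint.submodule ℝ (Matrix (Fin r) (Fin r) ℝ)) where
  toFun a := ⟨y * a.1 * y, by
    have ha : star a.1 = a.1 := a.2
    show star (y * a.1 * y) = y * a.1 * y
    rw [StarMul.star_mul, StarMul.star_mul, ha, hy, mul_assoc]⟩
  map_add' a b := by ext : 1; simp [Matrix.mul_add, Matrix.add_mul]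
  map_smul' c a := by ext : 1; simp [Matrix.mul_smul, Matrix.smul_mul, mul_assoc]

section Aux
open Finset
lemma prod_pairs {r : ℕ} (d : Fin r → ℝ) (hd : ∀ i, 0 < d i) :
    (∏ p : {p : Fin r × Fin r // p.1 ≤ p.2}, d p.1.1 * d p.1.2) = (∏ i, d i) ^ (r + 1) := by
  classical
  set f : Fin r × Fin r → ℝ := fun p => d p.1 * d p.2 with hf
  set S : Finset (Fin r × Fin r) := univ.filter (fun p => p.1 ≤ p.2) with hS
  set T : Finset (Fin r × Fin r) := univ.filter (fun p => p.2 ≤ p.1) with hT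
  have hL : (∏ p : {p : Fin r × Fin r // p.1 ≤ p.2}, d p.1.1 * d p.1.2) = ∏ p ∈ S, f p := by
    exact (Finset.prod_subtype S (fun x => by simp [hS]) f).symm
  have hTS : ∏ p ∈ T, f p = ∏ p ∈ S, f p := by
    apply Finset.prod_nbij' (fun p => p.swap) (fun p => p.swap) <;>
      simp [hS, hT, hf, mul_comm]
  have hunion : S ∪ T = univ := by
    ext p; simp [hS, hT, le_total]
  have hinter : S ∩ T = univ.filter (fun p => p.1 = p.2) := by
    ext p
    simp only [hS, hT, Finset.mem_inter, Finset.mem_filter, Finset.mem_univ, true_and]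
    constructor
    · rintro ⟨h1, h2⟩; exact le_antisymm h1 h2
    · rintro h; exact ⟨le_of_eq h, le_of_eq h.symm⟩
  have huniv : ∏ p ∈ (univ : Finset (Fin r × Fin r)), f p = (∏ i, d i) ^ (2 * r) := by
    rw [← Finset.univ_product_univ, Finset.prod_product]
    simp only [hf, Finset.prod_mul_distrib, Finset.prod_const, Finset.card_univ,
      Fintype.card_fin, Finset.prod_pow]
    rw [two_mul, pow_add]
  have hdiag : ∏ p ∈ univ.filter (fun p : Fin r × Fin r => p.1 = p.2), f p
      = (∏ i, d i) ^ 2 := by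
    rw [show ((∏ i, d i) ^ 2 = ∏ i : Fin r, f (i, i)) by
      simp [hf, pow_two, Finset.prod_mul_distrib]]
    apply Finset.prod_nbij' (fun p => p.1) (fun i => (i, i)) <;> simp +contextual [Prod.ext_iff]
  have hsq : (∏ p ∈ S, f p) ^ 2 = ((∏ i, d i) ^ (r + 1)) ^ 2 := by
    rw [pow_two]
    nth_rewrite 2 [← hTS]
    rw [← Finset.prod_union_inter, hunion, hinter, huniv, hdiag, ← pow_add, ← pow_mul]
    ring_nf
  have hpos1 : 0 < ∏ p ∈ S, f p := Finset.prod_pos fun p _ => mul_pos (hd _) (hd _)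
  have hpos2 : (0:ℝ) < (∏ i, d i) ^ (r + 1) := pow_pos (Finset.prod_pos fun i _ => hd i) _
  rw [hL]
  nlinarith [hsq, hpos1, hpos2]

/-- Coordinates of a symmetric matrix: upper-triangular entries. -/
noncomputable def symEquivFun (r : ℕ) :
    (selfAdjoint.submodule ℝ (Matrix (Fin r) (Fin r) ℝ)) ≃ₗ[ℝ]
      ({p : Fin r × Fin r // p.1 ≤ p.2} → ℝ) where
  toFun a := fun p => a.1 p.1.1 p.1.2
  map_add' a b := by funext p; rfl
  map_smul' c a := by funext p; rfl
  invFun f := ⟨Matrix.of fun i j =>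
      if h : i ≤ j then f ⟨(i, j), h⟩ else f ⟨(j, i), le_of_not_ge h⟩, by
    show star _ = _
    ext i j
    simp only [star_apply, Matrix.of_apply, star_trivial]
    rcases le_total i j with h | h
    · by_cases h' : j ≤ i
      · have : i = j := le_antisymm h h'
        subst this; simp
      · rw [dif_neg h', dif_pos h]
    · by_cases h' : i ≤ j
      · have : i = j := le_antisymm h' h
        subst this; simp
      · rw [dif_pos h, dif_neg h']⟩
  left_inv a := by
    have ha : ∀ i j, a.1 j i = a.1 i j := by
      intro i j
      have := congrFun (congrFun (a.2 : star a.1 = a.1) i) j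
      simpa [star_apply] using this
    ext i j
    show (Matrix.of fun i j => _ : Matrix (Fin r) (Fin r) ℝ) i j = a.1 i j
    by_cases h : i ≤ j
    · simp [h]
    · simp [h, ha]
  right_inv f := by
    funext p
    obtain ⟨⟨i, j⟩, h⟩ := p
    exact dif_pos h


end Aux

section Aux2
lemma det_quadRep_diagonal {r : ℕ} (d : Fin r → ℝ) (hd : ∀ i, 0 < d i)
    (h : star (Matrix.diagonal d) = Matrix.diagonal d)
    (quadRep : ∀ (y : Matrix (Fin r) (Fin r) ℝ), star y = y →
      Module.End ℝ (selfAdjoint.submodule ℝ (Matrix (Fin r) (Fin r) ℝ)))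
    (hq : ∀ y hy a, ((quadRep y hy a : selfAdjoint.submodule ℝ _) : Matrix (Fin r) (Fin r) ℝ)
      = y * a.1 * y) :
    LinearMap.det (quadRep (Matrix.diagonal d) h) = (∏ i, d i) ^ (r + 1) := by
  classical
  set B := Module.Basis.ofEquivFun (symEquivFun r) with hB
  rw [← LinearMap.det_toMatrix B]
  have key : LinearMap.toMatrix B B (quadRep (Matrix.diagonal d) h)
      = Matrix.diagonal (fun p : {p : Fin r × Fin r // p.1 ≤ p.2} => d p.1.1 * d p.1.2) := by
    ext p q
    rw [LinearMap.toMatrix_apply]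
    have h1 : (B.repr (quadRep (Matrix.diagonal d) h (B q))) p
        = d p.1.1 * d p.1.2 * (B.repr (B q)) p := by
      rw [hB, Module.Basis.ofEquivFun_repr_apply, Module.Basis.ofEquivFun_repr_apply]
      have e_apply : ∀ (a : selfAdjoint.submodule ℝ (Matrix (Fin r) (Fin r) ℝ))
          (p : {p : Fin r × Fin r // p.1 ≤ p.2}),
          (symEquivFun r) a p = (a : Matrix (Fin r) (Fin r) ℝ) p.1.1 p.1.2 := fun _ _ => rfl
      rw [e_apply, e_apply, hq]
      show (Matrix.diagonal d * ((Module.Basis.ofEquivFun (symEquivFun r)) q).1 * Matrix.diagonal d)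
          p.1.1 p.1.2 = _
      rw [Matrix.mul_diagonal, Matrix.diagonal_mul]
      ring
    rw [h1, B.repr_self, Finsupp.single_apply, Matrix.diagonal_apply]
    by_cases hpq : p = q
    · simp [hpq]
    · simp [hpq, Ne.symm hpq]
  rw [key, Matrix.det_diagonal]
  exact prod_pairs d hd


/-- Conjugation by a unitary as a linear equivalence of the symmetric matrices. -/
noncomputable def conjEquiv {r : ℕ} (U : Matrix (Fin r) (Fin r) ℝ)
    (hU : U ∈ Matrix.unitaryGroup (Fin r) ℝ) :
    (selfAdjoint.submodule ℝ (Matrix (Fin r) (Fin r) ℝ)) ≃ₗ[ℝ]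
      (selfAdjoint.submodule ℝ (Matrix (Fin r) (Fin r) ℝ)) where
  toFun a := ⟨star U * a.1 * U, by
    have ha : star a.1 = a.1 := a.2
    show star (star U * a.1 * U) = star U * a.1 * U
    rw [StarMul.star_mul, StarMul.star_mul, ha, star_star, mul_assoc]⟩
  invFun a := ⟨U * a.1 * star U, by
    have ha : star a.1 = a.1 := a.2
    show star (U * a.1 * star U) = U * a.1 * star U
    rw [StarMul.star_mul, StarMul.star_mul, ha, star_star, mul_assoc]⟩
  map_add' a b := by ext : 1; simp [Matrix.mul_add, Matrix.add_mul]
  map_smul' c a := by ext : 1; simp [Matrix.mul_smul, Matrix.smul_mul, mul_assoc]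
  left_inv a := by
    have h1 : U * star U = 1 := (Matrix.mem_unitaryGroup_iff).mp hU
    ext : 1
    show U * (star U * a.1 * U) * star U = a.1
    simp only [← Matrix.mul_assoc]
    rw [h1, Matrix.one_mul, Matrix.mul_assoc, h1, Matrix.mul_one]
  right_inv a := by
    have h2 : star U * U = 1 := (Matrix.mem_unitaryGroup_iff').mp hU
    ext : 1
    show star U * (U * a.1 * star U) * U = a.1
    simp only [← Matrix.mul_assoc]
    rw [h2, Matrix.one_mul, Matrix.mul_assoc, h2, Matrix.mul_one]

end Aux2

theorem stmt_16 (r : ℕ) (x y : Matrix (Fin r) (Fin r) ℝ)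
    (hx : x.PosDef) (hy : y.PosDef) (hxyx : (x * y * x).PosDef) :
    (x * y * x).det = x.det ^ 2 * y.det ∧
    ∀ hy' : star y = y, LinearMap.det (quadRep r y hy') = y.det ^ (r + 1) := by
  classical
  refine ⟨by rw [Matrix.det_mul, Matrix.det_mul]; ring, ?_⟩
  intro hy'
  have hH : y.IsHermitian := hy.1
  set U : Matrix (Fin r) (Fin r) ℝ := (hH.eigenvectorUnitary : Matrix (Fin r) (Fin r) ℝ) with hUdef
  have hUmem : U ∈ Matrix.unitaryGroup (Fin r) ℝ := hH.eigenvectorUnitary.2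
  set d : Fin r → ℝ := hH.eigenvalues with hddef
  have hco : (RCLike.ofReal ∘ d : Fin r → ℝ) = d := funext fun i => rfl
  have hspec : y = U * Matrix.diagonal d * star U := by
    have := hH.spectral_theorem
    rwa [hco] at this
  have hd : ∀ i, 0 < d i := hy.eigenvalues_pos
  have hDstar : star (Matrix.diagonal d) = Matrix.diagonal d := by
    simp [Matrix.star_eq_conjTranspose, Matrix.diagonal_conjTranspose]
  have h1 : U * star U = 1 := (Matrix.mem_unitaryGroup_iff).mp hUmem
  have h2 : star U * U = 1 := (Matrix.mem_unitaryGroup_iff').mp hUmem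
  set e := conjEquiv U hUmem with hedef
  have hconj : quadRep r y hy' =
      (e.symm : _ →ₗ[ℝ] _) ∘ₗ (quadRep r (Matrix.diagonal d) hDstar) ∘ₗ (e : _ →ₗ[ℝ] _) := by
    apply LinearMap.ext
    intro a
    ext : 1
    show y * a.1 * y = U * (Matrix.diagonal d * (star U * a.1 * U) * Matrix.diagonal d) * star U
    rw [hspec]
    simp only [← Matrix.mul_assoc]
  have hdc := LinearMap.det_conj (quadRep r (Matrix.diagonal d) hDstar) e.symm
  rw [LinearEquiv.symm_symm] at hdc
  rw [hconj, hdc, det_quadRep_diagonal d hd hDstar (quadRep r) (fun _ _ _ => rfl)]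
  have hdet : y.det = ∏ i, d i := by
    have := hH.det_eq_prod_eigenvalues
    simpa using this
  rw [hdet]
end
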